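/- arXiv:1008.0828 — 4 statements merged into one kernel-verified Lean document; each statement's English description precedes it below -/
import Mathlib

section
/- The number of Dyck paths from (0,0) to (n,n) whose touch composition equals a given composition α of n is the product over i of the Catalan numbers C_{α_i - 1}. -/
open Finset MvPolynomial

noncomputable section

/-- Base field `F = ℚ(q)`. -/
abbrev F : Type := RatFunc ℚ

/-- The parameter `q`. -/
noncomputable def q : F := RatFunc.X

/-- The ring of symmetric functions `Λ = F[p₁, p₂, p₃, …]`, where the variable
`X k` represents the power sum `p_{k+1}`. -/
abbrev SymF : Type := MvPolynomial ℕ F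

/-- `pp k` is the power sum `p_k` for `k ≥ 1`. -/
noncomputable def pp (k : ℕ) : SymF := MvPolynomial.X (k - 1)

/-- Complete homogeneous symmetric functions, via Newton's identity
`(n+1) h_{n+1} = ∑_{k=1}^{n+1} p_k h_{n+1-k}`. -/
noncomputable def hN : ℕ → SymF
  | 0 => 1
  | n + 1 => ((n : F) + 1)⁻¹ • ∑ k ∈ Finset.range (n + 1), pp (k + 1) * hN (n - k)
  termination_by n => n
  decreasing_by omega

/-- Elementary symmetric functions, via Newton's identity
`(n+1) e_{n+1} = ∑_{k=1}^{n+1} (-1)^{k-1} p_k e_{n+1-k}`. -/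
noncomputable def eN : ℕ → SymF
  | 0 => 1
  | n + 1 => ((n : F) + 1)⁻¹ • ∑ k ∈ Finset.range (n + 1), ((-1 : F) ^ k) • (pp (k + 1) * eN (n - k))
  termination_by n => n
  decreasing_by omega

/-- `hh m = h_m` for `m ≥ 0` and `0` for `m < 0`. -/
noncomputable def hh (m : ℤ) : SymF := if 0 ≤ m then hN m.toNat else 0

/-- `ee m = e_m` for `m ≥ 0` and `0` for `m < 0`. -/
noncomputable def ee (m : ℤ) : SymF := if 0 ≤ m then eN m.toNat else 0

/-- The plethystic translation `f[X] ↦ f[X + (1-q)z]`, determined by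
`p_k ↦ p_k + (1-q^k) z^k`.  The coefficient of `z^r` computes `h_r[X(1-q)]^⊥ f`. -/
noncomputable def Tq : SymF →ₐ[F] Polynomial SymF :=
  MvPolynomial.aeval fun k =>
    Polynomial.C (MvPolynomial.X k) +
      Polynomial.C (MvPolynomial.C (1 - q ^ (k + 1))) * Polynomial.X ^ (k + 1)

/-- The operator `h_r[X(1-q)]^⊥`. -/
noncomputable def Dq (r : ℕ) (P : SymF) : SymF := (Tq P).coeff r

/-- The plethystic translation `f[X] ↦ f[X - z]`, determined by `p_k ↦ p_k - z^k`;
one has `f[X - z] = ∑_k (-z)^k (e_k^⊥ f)[X]`. -/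
noncomputable def T1 : SymF →ₐ[F] Polynomial SymF :=
  MvPolynomial.aeval fun k =>
    Polynomial.C (MvPolynomial.X k) - Polynomial.X ^ (k + 1)

/-- The operator `e_r^⊥`. -/
noncomputable def eperp (r : ℕ) (P : SymF) : SymF := ((-1 : F) ^ r) • (T1 P).coeff r

/-- The Hall–Littlewood creation operator
`ℂ_m P = (-1/q)^{m-1} ∑_{r ≥ 0} q^{-r} h_{m+r} · (h_r[X(1-q)])^⊥ P`
(the sum is finite: terms with `r > deg_z (Tq P)` vanish). -/
noncomputable def Cop (m : ℤ) (P : SymF) : SymF :=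
  ((-q⁻¹ : F) ^ (m - 1)) •
    ∑ r ∈ Finset.range ((Tq P).natDegree + 1), ((q⁻¹ : F) ^ r) • (hh (m + r) * Dq r P)

/-- The creation operator `𝔹_m P = ∑_{r ≥ 0} (-1)^r e_{m+r} · (h_r[X(1-q)])^⊥ P`. -/
noncomputable def Bop (m : ℤ) (P : SymF) : SymF :=
  ∑ r ∈ Finset.range ((Tq P).natDegree + 1), ((-1 : F) ^ r) • (ee (m + r) * Dq r P)

/-- The Bernstein (Schur) creation operator `S_m P = ∑_{r ≥ 0} (-1)^r h_{m+r} · e_r^⊥ P`. -/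
noncomputable def Sop (m : ℤ) (P : SymF) : SymF :=
  ∑ r ∈ Finset.range ((T1 P).natDegree + 1), ((-1 : F) ^ r) • (hh (m + r) * eperp r P)

/-- `C_α[X;q] = ℂ_{α₁} ℂ_{α₂} ⋯ ℂ_{α_ℓ}(1)`. -/
noncomputable def Cfun : List ℕ → SymF
  | [] => 1
  | a :: l => Cop a (Cfun l)

/-- `B_α[X;q] = 𝔹_{α_ℓ} 𝔹_{α_{ℓ-1}} ⋯ 𝔹_{α₁}(1)`. -/
noncomputable def Bfun (l : List ℕ) : SymF := l.foldl (fun acc a => Bop a acc) 1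

end

/-- The touch set `{0} ∪ Des(c)` of a composition `c` of `n`:
the set of partial sums `c₁ + ⋯ + c_i` for `0 ≤ i < ℓ(c)` (0-based touch rows). -/
def touchSet {n : ℕ} (c : Composition n) : Finset ℕ :=
  (Finset.range c.length).image fun i => c.sizeUpTo i

/-- The descent set of a composition: its proper nonzero partial sums. -/
def DesSet {n : ℕ} (c : Composition n) : Finset ℕ := (touchSet c).erase 0

/-- `Refines β α` means `β ≤ α`: `β` is finer than `α`, i.e. `Des(α) ⊆ Des(β)`. -/
abbrev Refines {n : ℕ} (β α : Composition n) : Prop := touchSet α ⊆ touchSet β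

/-- `doffC α β = doff_α(DP(β))` for `β ≤ α`:
`∑_{k=1}^{ℓ(α)} (ℓ(α)-k) r_k` where `r_k` is the number of parts of `β`
lying inside the `k`-th part of `α`. -/
def doffC {n : ℕ} (α β : Composition n) : ℕ :=
  ∑ k ∈ Finset.range α.length,
    (α.length - 1 - k) *
      ((touchSet β).filter fun s => α.sizeUpTo k ≤ s ∧ s < α.sizeUpTo (k + 1)).card

/-- The reversed composition. -/
def revC {n : ℕ} (c : Composition n) : Composition n :=
  ⟨c.blocks.reverse, fun hi => c.blocks_pos (List.mem_reverse.mp hi), by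
    rw [List.sum_reverse]; exact c.blocks_sum⟩

/-- A Dyck path from `(0,0)` to `(n,n)`, encoded by its arm sequence:
`arm i` is the number of cells between the path and the diagonal in row `i+1`
(rows are 0-indexed here). -/
structure DyckPath (n : ℕ) where
  arm : ℕ → ℕ
  arm_zero : 0 < n → arm 0 = 0
  arm_step : ∀ i, i + 1 < n → arm (i + 1) ≤ arm i + 1
  arm_outside : ∀ i, n ≤ i → arm i = 0

/-- `area(D) = ∑ᵢ aᵢ`. -/
def area {n : ℕ} (D : DyckPath n) : ℕ := ∑ i ∈ Finset.range n, D.arm i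

/-- `dinv(D) = #{(i,j) : i < j, aᵢ - aⱼ ∈ {0,1}}`. -/
def dinv {n : ℕ} (D : DyckPath n) : ℕ :=
  ((Finset.range n ×ˢ Finset.range n).filter fun p =>
      p.1 < p.2 ∧ (D.arm p.1 = D.arm p.2 ∨ D.arm p.1 = D.arm p.2 + 1)).card

/-- `IsTouch D α` says that `touch(D) = α`: the rows where the arm vanishes are
exactly the partial sums of `α`. -/
def IsTouch {n : ℕ} (D : DyckPath n) (α : Composition n) : Prop :=
  ∀ i < n, (D.arm i = 0 ↔ i ∈ touchSet α)

/-- `doff_α(D)`, for a path `D` whose touch composition refines `α`. -/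
def doffD {n : ℕ} (α : Composition n) (D : DyckPath n) : ℕ :=
  ∑ k ∈ Finset.range α.length,
    (α.length - 1 - k) *
      ((Finset.Ico (α.sizeUpTo k) (α.sizeUpTo (k + 1))).filter fun i => D.arm i = 0).card

instance {n : ℕ} : DecidableEq (Composition n) := fun a b =>
  decidable_of_iff (a.blocks = b.blocks) ⟨fun h => by cases a; cases b; simpa using h,
    fun h => by rw [h]⟩

noncomputable section

/-- Plethystic evaluation at the alphabet `1 - q`: the algebra map `p_k ↦ 1 - q^k`. -/
noncomputable def evOneMinusQ : SymF →ₐ[F] F := MvPolynomial.aeval fun k => 1 - q ^ (k + 1)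

/-- The cells of the Young diagram of a partition given as a (weakly decreasing)
list of parts: `(i, j)` with `j < lᵢ` (row `i`, column `j`, both 0-based). -/
def pcells (l : List ℕ) : Finset (ℕ × ℕ) :=
  (Finset.range l.length ×ˢ Finset.range (l.foldr max 0)).filter fun c => c.2 < l.getD c.1 0

/-- The arm of a cell: number of cells strictly to its right in its row. -/
def armC (l : List ℕ) (c : ℕ × ℕ) : ℕ := l.getD c.1 0 - c.2 - 1

/-- The leg of a cell: number of cells of the diagram in its column in later rows. -/
def legC (l : List ℕ) (c : ℕ × ℕ) : ℕ :=
  ((Finset.Ico (c.1 + 1) l.length).filter fun i => c.2 < l.getD i 0).card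

/-- The `k`-th part (`k ≥ 1`) of the conjugate partition: `μ'_k = #{i : μᵢ ≥ k}`. -/
def conjPart (l : List ℕ) (k : ℕ) : ℕ := l.countP fun x => k ≤ x

/-- The multiplicity `m_i(μ')` of `i` among the parts of the conjugate partition. -/
def mConj (l : List ℕ) (i : ℕ) : ℕ :=
  ((Finset.Icc 1 l.headI).filter fun k => conjPart l k = i).card

/-- `n(μ') = ∑ (k-1) μ'_k`. -/
def nConj (l : List ℕ) : ℕ := ∑ k ∈ Finset.Icc 1 l.headI, (k - 1) * conjPart l k

/-- The `q`-Pochhammer symbol `(q;q)_k = ∏_{j=1}^k (1 - q^j)` as an element of `F`. -/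
noncomputable def qpoch (k : ℕ) : F := ∏ j ∈ Finset.Icc 1 k, (1 - q ^ j)

end

section AuxDyck

theorem DyckPath.ext' {n : ℕ} {A B : DyckPath n} (h : ∀ i, A.arm i = B.arm i) : A = B := by
  cases A; cases B; simpa using funext h

theorem DyckPath.arm0 {n : ℕ} (D : DyckPath n) : D.arm 0 = 0 := by
  rcases Nat.eq_zero_or_pos n with h | h
  · exact D.arm_outside 0 (by omega)
  · exact D.arm_zero h

theorem DyckPath.arm_le {n : ℕ} (D : DyckPath n) (i : ℕ) : D.arm i ≤ i := by
  induction i with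
  | zero => simp [D.arm0]
  | succ i ih =>
    by_cases h : i + 1 < n
    · have := D.arm_step i h; omega
    · rw [D.arm_outside (i + 1) (by omega)]; omega

instance dyckFinite (n : ℕ) : Finite (DyckPath n) := by
  apply Finite.of_injective
    (fun D => (fun i : Fin n => (⟨D.arm i, lt_of_le_of_lt (D.arm_le i) i.isLt⟩ : Fin n)))
  intro A B h
  apply DyckPath.ext'
  intro i
  by_cases hi : i < n
  · exact congrArg Fin.val (congrFun h ⟨i, hi⟩)
  · rw [A.arm_outside i (by omega), B.arm_outside i (by omega)]

instance dyckUnique : Unique (DyckPath 0) where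
  default := ⟨fun _ => 0, by omega, by omega, fun _ _ => rfl⟩
  uniq D := by apply DyckPath.ext'; intro i; exact D.arm_outside i (Nat.zero_le i)

/-- no touch strictly between 0 and n -/
def PosP {n : ℕ} (D : DyckPath n) : Prop := ∀ i, 0 < i → i < n → D.arm i ≠ 0

/-- shift equivalence: primitive paths of size m+1 ≃ paths of size m -/
def posEquiv (m : ℕ) : {A : DyckPath (m + 1) // PosP A} ≃ DyckPath m where
  toFun A := ⟨fun i => A.1.arm (i + 1) - 1,
    fun hm => by have := A.1.arm_step 0 (by omega); have := A.1.arm0; omega,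
    fun i hi => by have := A.1.arm_step (i + 1) (by omega); omega,
    fun i hi => by rw [A.1.arm_outside (i + 1) (by omega)]⟩
  invFun C := ⟨⟨fun i => if i = 0 then 0 else if i ≤ m then C.arm (i - 1) + 1 else 0,
      fun _ => by simp,
      fun i hi => by
        rcases Nat.eq_zero_or_pos i with h | h
        · subst h
          rw [if_pos rfl, if_neg (show ¬ (0 + 1 = 0) by omega)]
          split
          · have h0 := C.arm0
            simp only [show (0 + 1 - 1 : ℕ) = 0 from rfl]
            omega
          · omega
        · have h1 : ¬ (i = 0) := by omega
          have h2 : ¬ (i + 1 = 0) := by omega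
          rw [if_neg h2, if_neg h1]
          by_cases h3 : i + 1 ≤ m
          · have hs := C.arm_step (i - 1) (by omega)
            rw [if_pos h3, if_pos (show i ≤ m by omega),
              show i + 1 - 1 = (i - 1) + 1 by omega]
            omega
          · rw [if_neg h3]; omega
      , fun i hi => by
        have h2 : ¬ (i ≤ m) := by omega
        by_cases h1 : i = 0
        · simp [h1]
        · simp [h1, h2]⟩,
    by
      intro i h0 hi h
      have h1 : ¬ (i = 0) := by omega
      have h2 : i ≤ m := by omega
      simp only [h1, if_false, if_pos h2] at h
      omega⟩
  left_inv A := by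
    apply Subtype.ext; apply DyckPath.ext'
    intro i
    dsimp only
    rcases Nat.eq_zero_or_pos i with h | h
    · simp [h, A.1.arm0]
    · have h1 : ¬ (i = 0) := by omega
      simp only [h1, if_false]
      by_cases h2 : i ≤ m
      · simp only [h2, if_true]
        have he : i - 1 + 1 = i := by omega
        rw [he]
        have := A.2 i h (by omega)
        omega
      · simp only [h2, if_false]
        rw [A.1.arm_outside i (by omega)]
  right_inv C := by
    apply DyckPath.ext'
    intro i
    dsimp only
    rw [if_neg (show ¬ (i + 1 = 0) by omega)]
    by_cases h2 : i + 1 ≤ m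
    · rw [if_pos h2, show i + 1 - 1 = i by omega]
      omega
    · rw [if_neg h2, C.arm_outside i (by omega)]

/-- splitting a Dyck path at a touch point -/
def splitEquiv (n a : ℕ) (ha : a ≤ n) :
    {D : DyckPath n // D.arm a = 0} ≃ DyckPath a × DyckPath (n - a) where
  toFun D :=
    (⟨fun i => if i < a then D.1.arm i else 0,
      fun h0 => by rw [if_pos h0]; exact D.1.arm0,
      fun i hi => by
        split
        · rw [if_pos (by omega)]; exact D.1.arm_step i (by omega)
        · omega,
      fun i hi => by rw [if_neg (by omega)]⟩,
     ⟨fun i => D.1.arm (a + i),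
      fun h0 => by simpa using D.2,
      fun i hi => by
        have he : a + (i + 1) = (a + i) + 1 := by omega
        rw [he]; exact D.1.arm_step (a + i) (by omega),
      fun i hi => D.1.arm_outside _ (by omega)⟩)
  invFun P := ⟨⟨fun i => if i < a then P.1.arm i else P.2.arm (i - a),
      fun h0 => by
        split
        · exact P.1.arm_zero (by omega)
        · simpa using P.2.arm0,
      fun i hi => by
        by_cases h1 : i + 1 < a
        · rw [if_pos h1, if_pos (by omega)]; exact P.1.arm_step i h1
        · rw [if_neg h1]
          by_cases h2 : i + 1 = a
          · have he : i + 1 - a = 0 := by omega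
            rw [he, P.2.arm0]; omega
          · rw [if_neg (by omega)]
            have he : i + 1 - a = (i - a) + 1 := by omega
            rw [he]; exact P.2.arm_step (i - a) (by omega),
      fun i hi => by
        rw [if_neg (by omega)]
        exact P.2.arm_outside _ (by omega)⟩,
    by
      dsimp only
      rw [if_neg (by omega)]
      simpa using P.2.arm0⟩
  left_inv D := by
    apply Subtype.ext; apply DyckPath.ext'
    intro i
    dsimp only
    split
    · rfl
    · have he : a + (i - a) = i := by omega
      rw [he]
  right_inv P := by
    refine Prod.ext (DyckPath.ext' fun i => ?_) (DyckPath.ext' fun i => ?_)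
    · dsimp only
      split
      · rfl
      · rw [P.1.arm_outside i (by omega)]
    · dsimp only
      rw [if_neg (by omega)]
      congr 1
      omega

theorem mem_touchSet {n : ℕ} {c : Composition n} {s : ℕ} :
    s ∈ touchSet c ↔ ∃ i < c.length, c.sizeUpTo i = s := by
  simp [touchSet, Finset.mem_image, Finset.mem_range]

theorem natCard_sigma {ι : Type*} [Fintype ι] (f : ι → Type*) [∀ i, Finite (f i)] :
    Nat.card (Σ i, f i) = ∑ i, Nat.card (f i) := by
  letI := fun i => Fintype.ofFinite (f i)
  simp [Nat.card_eq_fintype_card, Fintype.card_sigma]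

theorem card_posP (a : ℕ) (ha : 0 < a) :
    Nat.card {A : DyckPath a // PosP A} = Nat.card (DyckPath (a - 1)) := by
  obtain ⟨b, rfl⟩ : ∃ b, a = b + 1 := ⟨a - 1, by omega⟩
  simpa using Nat.card_congr (posEquiv b)

theorem card_dyck : ∀ m : ℕ, Nat.card (DyckPath m) = catalan m := by
  intro m
  induction m using Nat.strong_induction_on with
  | _ m ih =>
  match m with
  | 0 => simp [Nat.card_unique, catalan_zero]
  | (m + 1) =>
    have hex : ∀ D : DyckPath (m + 1), ∃ t, 0 < t ∧ D.arm t = 0 := fun D =>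
      ⟨m + 1, by omega, D.arm_outside _ le_rfl⟩
    have hfr : ∀ D : DyckPath (m + 1), Nat.find (hex D) ≤ m + 1 := fun D =>
      Nat.find_le ⟨by omega, D.arm_outside _ le_rfl⟩
    have hfr0 : ∀ D : DyckPath (m + 1), 0 < Nat.find (hex D) := fun D => (Nat.find_spec (hex D)).1
    set f : DyckPath (m + 1) → Fin (m + 1) := fun D => ⟨Nat.find (hex D) - 1, by
      have := hfr D; have := hfr0 D; omega⟩ with hf
    have key : ∀ a : Fin (m + 1),
        Nat.card {D // f D = a} = catalan a * catalan (m - a) := by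
      intro a
      have e2 : {D // f D = a} ≃
          {D : DyckPath (m + 1) // D.arm (a + 1) = 0 ∧
            ∀ i, 0 < i → i < (a : ℕ) + 1 → D.arm i ≠ 0} := by
        apply Equiv.subtypeEquiv (Equiv.refl _)
        intro D
        simp only [Equiv.refl_apply, hf]
        rw [Fin.ext_iff]
        simp only
        constructor
        · intro h
          have h' : Nat.find (hex D) = (a : ℕ) + 1 := by have := hfr0 D; omega
          have h1 := Nat.find_spec (hex D)
          rw [h'] at h1
          refine ⟨h1.2, fun i h0 hi hz => ?_⟩
          have := Nat.find_min (hex D) (by omega : i < Nat.find (hex D)) ⟨h0, hz⟩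
          exact this
        · rintro ⟨h1, h2⟩
          have h' : Nat.find (hex D) = (a : ℕ) + 1 := by
            rw [Nat.find_eq_iff]
            exact ⟨⟨by omega, h1⟩, fun i hi => by
              rintro ⟨hi0, hiz⟩
              exact h2 i hi0 hi hiz⟩
          omega
      have e3 : {D : DyckPath (m + 1) // D.arm (a + 1) = 0 ∧
            ∀ i, 0 < i → i < (a : ℕ) + 1 → D.arm i ≠ 0} ≃
          {x : {D : DyckPath (m + 1) // D.arm ((a : ℕ) + 1) = 0} //
            ∀ i, 0 < i → i < (a : ℕ) + 1 → x.1.arm i ≠ 0} :=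
        (Equiv.subtypeSubtypeEquivSubtypeInter _ _).symm
      have e4 : {x : {D : DyckPath (m + 1) // D.arm ((a : ℕ) + 1) = 0} //
            ∀ i, 0 < i → i < (a : ℕ) + 1 → x.1.arm i ≠ 0} ≃
          {p : DyckPath ((a : ℕ) + 1) × DyckPath ((m + 1) - ((a : ℕ) + 1)) // PosP p.1} := by
        apply Equiv.subtypeEquiv (splitEquiv (m + 1) ((a : ℕ) + 1) (by omega))
        intro D
        simp only [splitEquiv, Equiv.coe_fn_mk, PosP]
        constructor
        · intro h i h0 hi hz
          rw [if_pos hi] at hz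
          exact h i h0 hi hz
        · intro h i h0 hi hz
          exact h i h0 hi (by rw [if_pos hi]; exact hz)
      have e5 := e2.trans (e3.trans (e4.trans Equiv.prodSubtypeFstEquivSubtypeProd))
      rw [Nat.card_congr e5, Nat.card_prod, card_posP _ (by omega)]
      have h1 : ((a : ℕ) + 1 - 1) = (a : ℕ) := by omega
      have h2 : ((m + 1) - ((a : ℕ) + 1)) = m - (a : ℕ) := by omega
      rw [h1, h2, ih _ (by omega), ih _ (by have := a.isLt; omega)]
    rw [Nat.card_congr (Equiv.sigmaFiberEquiv f).symm, natCard_sigma]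
    simp only [key]
    rw [catalan_succ]

def reindexD {k k' : ℕ} (h : k = k') : DyckPath k ≃ DyckPath k' where
  toFun D := ⟨D.arm, fun h0 => D.arm_zero (h ▸ h0), fun i hi => D.arm_step i (h ▸ hi),
    fun i hi => D.arm_outside i (h ▸ hi)⟩
  invFun D := ⟨D.arm, fun h0 => D.arm_zero (h ▸ h0), fun i hi => D.arm_step i (h ▸ hi),
    fun i hi => D.arm_outside i (h ▸ hi)⟩
  left_inv D := DyckPath.ext' fun _ => rfl
  right_inv D := DyckPath.ext' fun _ => rfl

def splitE (n a m : ℕ) (ha : a ≤ n) (h : n - a = m) :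
    {D : DyckPath n // D.arm a = 0} ≃ DyckPath a × DyckPath m :=
  (splitEquiv n a ha).trans (Equiv.prodCongr (Equiv.refl _) (reindexD h))

theorem splitE_arm1 (n a m : ℕ) (ha : a ≤ n) (h : n - a = m)
    (x : {D : DyckPath n // D.arm a = 0}) (i : ℕ) :
    (splitE n a m ha h x).1.arm i = if i < a then x.1.arm i else 0 := rfl

theorem splitE_arm2 (n a m : ℕ) (ha : a ≤ n) (h : n - a = m)
    (x : {D : DyckPath n // D.arm a = 0}) (i : ℕ) :
    (splitE n a m ha h x).2.arm i = x.1.arm (a + i) := rfl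

theorem sizeUpTo_cons {n m : ℕ} (α : Composition n) (γ : Composition m) (a i : ℕ)
    (hb : α.blocks = a :: γ.blocks) : α.sizeUpTo (i + 1) = a + γ.sizeUpTo i := by
  simp [Composition.sizeUpTo, hb]

theorem length_cons {n m : ℕ} (α : Composition n) (γ : Composition m) (a : ℕ)
    (hb : α.blocks = a :: γ.blocks) : α.length = γ.length + 1 := by
  simp [Composition.length, hb]

theorem mem_touchSet_cons {n m : ℕ} (α : Composition n) (γ : Composition m) (a : ℕ)
    (hb : α.blocks = a :: γ.blocks) (s : ℕ) :
    s ∈ touchSet α ↔ s = 0 ∨ ∃ t ∈ touchSet γ, s = a + t := by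
  rw [mem_touchSet]
  constructor
  · rintro ⟨i, hi, rfl⟩
    cases i with
    | zero => left; exact α.sizeUpTo_zero
    | succ i =>
      right
      refine ⟨γ.sizeUpTo i, mem_touchSet.2 ⟨i, ?_, rfl⟩, sizeUpTo_cons α γ a i hb⟩
      rw [length_cons α γ a hb] at hi
      omega
  · rintro (rfl | ⟨t, ht, rfl⟩)
    · exact ⟨0, by rw [length_cons α γ a hb]; omega, α.sizeUpTo_zero⟩
    · obtain ⟨i, hi, rfl⟩ := mem_touchSet.1 ht
      exact ⟨i + 1, by rw [length_cons α γ a hb]; omega, sizeUpTo_cons α γ a i hb⟩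

theorem card_touch : ∀ (l : List ℕ) (n : ℕ) (α : Composition n), α.blocks = l →
    Nat.card {D : DyckPath n // IsTouch D α} = (l.map fun a => catalan (a - 1)).prod := by
  intro l
  induction l with
  | nil =>
    intro n α hb
    have hn : n = 0 := by rw [← α.blocks_sum, hb]; rfl
    subst hn
    have hall : ∀ D : DyckPath 0, IsTouch D α := fun D i hi => absurd hi (by omega)
    rw [Nat.card_congr (Equiv.subtypeUnivEquiv hall)]
    simp [Nat.card_unique]
  | cons a rest ih =>
    intro n α hb
    have hpos : ∀ b ∈ rest, 0 < b := fun b hbm => α.blocks_pos (hb ▸ List.mem_cons_of_mem a hbm)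
    have ha : 0 < a := α.blocks_pos (hb ▸ List.mem_cons_self)
    have hn : n = a + rest.sum := by rw [← α.blocks_sum, hb]; simp
    obtain ⟨γ, hγb⟩ : ∃ γ : Composition rest.sum, γ.blocks = rest :=
      ⟨⟨rest, fun hi => hpos _ hi, rfl⟩, rfl⟩
    have hbγ : α.blocks = a :: γ.blocks := by rw [hb, hγb]
    have hmem := mem_touchSet_cons α γ a hbγ
    have hγlen : rest.sum ≠ 0 → 0 < γ.length := by
      intro h
      have hne : γ.blocks ≠ [] := by
        intro he
        rw [← γ.blocks_sum, he] at h
        exact h rfl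
      simpa [Composition.length, List.length_pos_iff] using hne
    -- every touching path has arm a = 0
    have htouch : ∀ D : DyckPath n, IsTouch D α → D.arm a = 0 := by
      intro D hD
      rcases Nat.eq_zero_or_pos rest.sum with h | h
      · exact D.arm_outside a (by omega)
      · refine (hD a (by omega)).2 ((hmem a).2 (Or.inr ⟨0, ?_, by omega⟩))
        exact mem_touchSet.2 ⟨0, hγlen (by omega), γ.sizeUpTo_zero⟩
    -- the splitting equivalence
    set e : {D : DyckPath n // D.arm a = 0} ≃ DyckPath a × DyckPath rest.sum :=
      splitE n a rest.sum (by omega) (by omega) with he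
    have harm1 : ∀ x : {D : DyckPath n // D.arm a = 0}, ∀ i,
        (e x).1.arm i = if i < a then x.1.arm i else 0 := fun x i => splitE_arm1 _ _ _ _ _ x i
    have harm2 : ∀ x : {D : DyckPath n // D.arm a = 0}, ∀ i,
        (e x).2.arm i = x.1.arm (a + i) := fun x i => splitE_arm2 _ _ _ _ _ x i
    have e2 : {x : {D : DyckPath n // D.arm a = 0} // IsTouch x.1 α} ≃
        {p : DyckPath a × DyckPath rest.sum // PosP p.1 ∧ IsTouch p.2 γ} := by
      apply Equiv.subtypeEquiv e
      intro x
      constructor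
      · intro hD
        constructor
        · intro i h0 hi hz
          rw [harm1, if_pos hi] at hz
          rcases (hmem i).1 ((hD i (by omega)).1 hz) with h | ⟨t, ht, rfl⟩
          · omega
          · omega
        · intro i him
          rw [harm2]
          rw [(hD (a + i) (by omega)), hmem]
          constructor
          · rintro (h | ⟨t, ht, he⟩)
            · omega
            · have : t = i := by omega
              rwa [← this]
          · intro h
            exact Or.inr ⟨i, h, rfl⟩
      · rintro ⟨hpos', hdrop⟩
        intro i hi
        rcases Nat.lt_or_ge i a with hia | hia
        · rcases Nat.eq_zero_or_pos i with h | h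
          · subst h
            simp [x.1.arm0, hmem]
          · have h1 : x.1.arm i ≠ 0 := by
              have := hpos' i h hia
              rwa [harm1, if_pos hia] at this
            have h2 : i ∉ touchSet α := by
              rw [hmem]
              rintro (h | ⟨t, ht, rfl⟩) <;> omega
            exact iff_of_false h1 h2
        · have hit : i = a + (i - a) := by omega
          have h3 := hdrop (i - a) (by omega)
          rw [harm2] at h3
          rw [hit, h3, hmem]
          constructor
          · intro h
            exact Or.inr ⟨i - a, h, rfl⟩
          · rintro (h | ⟨t, ht, he⟩)
            · omega
            · have : t = i - a := by omega
              rwa [← this]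
    have e1 : {D : DyckPath n // IsTouch D α} ≃
        {x : {D : DyckPath n // D.arm a = 0} // IsTouch x.1 α} :=
      (Equiv.subtypeSubtypeEquivSubtype (fun {D} hD => htouch D hD)).symm
    rw [Nat.card_congr ((e1.trans e2).trans
        (Equiv.subtypeProdEquivProd (p := PosP) (q := fun B => IsTouch B γ))),
      Nat.card_prod, card_posP a ha, card_dyck, ih rest.sum γ hγb,
      List.map_cons, List.prod_cons]


end AuxDyck

/-- the number of Dyck paths from `(0,0)` to `(n,n)` whose touch
composition equals a given composition `α` of `n` is `∏ᵢ C_{αᵢ - 1}`. -/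
theorem stmt0 (n : ℕ) (α : Composition n) :
    Nat.card {D : DyckPath n // IsTouch D α} =
      (α.blocks.map fun a => catalan (a - 1)).prod := by
  exact card_touch α.blocks n α rfl
end

section
/- For a partition μ of n, ∏_{c∈μ, l(c)=0}(1 - q^{a(c)+1}) · ∏_{c∈μ, l(c)≠0}(- q^{a(c)+1}) = (-1)^{n-μ_1} q^{n + n(μ') - M(μ')} ∏_{i=1}^{n} (q;q)_{m_i(μ')}, where n(λ) = Σ (i-1)λ_i, M(λ) = Σ_i binom(m_i(λ)+1, 2), m_i(λ) is the number of parts of λ equal to i, and (q;q)_k = ∏_{j=1}^{k}(1-q^j). -/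
open Finset MvPolynomial

section AuxStmt10

open Finset

lemma q_ne_zero : q ≠ 0 := RatFunc.X_ne_zero

lemma pascal2 (k : ℕ) : (k + 1).choose 2 = k.choose 2 + k := by
  rw [Nat.choose_succ_succ]
  simp [Nat.choose_one_right]
  omega

lemma gauss (n : ℕ) : ∑ j ∈ Finset.range n, j = n.choose 2 := by
  induction n with
  | zero => simp
  | succ n ih => rw [Finset.sum_range_succ, ih, pascal2]

lemma choose2_le {h a : ℕ} (hha : h ≤ a) : h.choose 2 ≤ a * h := by
  induction h with
  | zero => simp
  | succ h ih =>
    rw [pascal2, Nat.mul_succ]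
    exact Nat.add_le_add (ih (by omega)) (by omega)

lemma keyArith {h a : ℕ} (hha : h ≤ a) :
    a * h + (a - h + 1).choose 2 = a + a.choose 2 + h.choose 2 := by
  induction h with
  | zero => simp only [Nat.sub_zero, Nat.mul_zero, pascal2, Nat.choose_zero_succ]; omega
  | succ h ih =>
    have H1 := ih (by omega)
    have e1 : a - h = a - (h + 1) + 1 := by omega
    rw [e1, pascal2 (a - (h+1) + 1)] at H1
    rw [pascal2 h, pascal2 (a - (h+1))] at *
    have H4 : a * (h + 1) = a * h + a := by ring
    omega

lemma getD_le_foldr : ∀ (l : List ℕ) (i : ℕ), i < l.length → l.getD i 0 ≤ l.foldr max 0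
  | a :: t, 0, _ => le_max_left _ _
  | a :: t, i + 1, hi =>
    le_trans (getD_le_foldr t i (by simpa using hi)) (le_max_right _ _)

lemma mem_pcells {l : List ℕ} {c : ℕ × ℕ} :
    c ∈ pcells l ↔ c.1 < l.length ∧ c.2 < l.getD c.1 0 := by
  simp only [pcells, Finset.mem_filter, Finset.mem_product, Finset.mem_range]
  constructor
  · rintro ⟨⟨h1, _⟩, h2⟩; exact ⟨h1, h2⟩
  · rintro ⟨h1, h2⟩; exact ⟨⟨h1, lt_of_lt_of_le h2 (getD_le_foldr l c.1 h1)⟩, h2⟩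

lemma mem_le_headI {l : List ℕ} (hs : l.Pairwise (· ≥ ·)) {x : ℕ} (hx : x ∈ l) :
    x ≤ l.headI := by
  cases l with
  | nil => simp at hx
  | cons a t =>
    rcases List.mem_cons.mp hx with h | h
    · simp [h]
    · exact (List.pairwise_cons.mp hs).1 x h

lemma getD_le_headI {l : List ℕ} (hs : l.Pairwise (· ≥ ·)) {i : ℕ} (hi : i < l.length) :
    l.getD i 0 ≤ l.headI := by
  rw [List.getD_eq_getElem l 0 hi]
  exact mem_le_headI hs (List.getElem_mem hi)

lemma headI_le_sum (l : List ℕ) : l.headI ≤ l.sum := by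
  cases l with
  | nil => simp
  | cons a t => simp [List.headI, List.sum_cons]

lemma length_le_sum {l : List ℕ} (hp : ∀ x ∈ l, 0 < x) : l.length ≤ l.sum := by
  induction l with
  | nil => simp
  | cons a t ih =>
    simp only [List.length_cons, List.sum_cons]
    have h1 := hp a (by simp)
    have h2 := ih (fun x hx => hp x (by simp [hx]))
    omega

lemma conjPart_cons (a : ℕ) (t : List ℕ) (k : ℕ) :
    conjPart (a :: t) k = conjPart t k + if k ≤ a then 1 else 0 := by
  simp [conjPart, List.countP_cons]

lemma conjPart_eq_zero_iff {t : List ℕ} (hs : t.Pairwise (· ≥ ·)) {k : ℕ} (hk : 1 ≤ k) :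
    conjPart t k = 0 ↔ t.headI < k := by
  rw [conjPart, List.countP_eq_zero]
  constructor
  · intro h
    cases t with
    | nil => exact hk
    | cons b t' =>
      have := h b (by simp)
      simp only [decide_eq_true_eq] at this
      simpa using Nat.lt_of_not_le this
  · intro h x hx
    have := mem_le_headI hs hx
    simp only [decide_eq_true_eq]
    omega

lemma conjPart_le_length (t : List ℕ) (k : ℕ) : conjPart t k ≤ t.length :=
  List.countP_le_length

lemma mConj_eq_zero {t : List ℕ} {i : ℕ} (hi : t.length < i) : mConj t i = 0 := by
  rw [mConj, Finset.card_eq_zero, Finset.filter_eq_empty_iff]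
  intro k _
  have := conjPart_le_length t k
  omega

lemma mConj_cons_one {a : ℕ} {t : List ℕ} (hs : t.Pairwise (· ≥ ·)) (hha : t.headI ≤ a) :
    mConj (a :: t) 1 = a - t.headI := by
  rw [mConj]
  have hset : ((Finset.Icc 1 ((a :: t).headI)).filter fun k => conjPart (a :: t) k = 1)
      = Finset.Ioc t.headI a := by
    ext k
    simp only [Finset.mem_filter, Finset.mem_Icc, Finset.mem_Ioc, List.headI_cons]
    constructor
    · rintro ⟨⟨h1, h2⟩, h3⟩
      rw [conjPart_cons, if_pos h2] at h3
      have h0 : conjPart t k = 0 := by omega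
      exact ⟨(conjPart_eq_zero_iff hs h1).mp h0, h2⟩
    · rintro ⟨h1, h2⟩
      have hk1 : 1 ≤ k := by omega
      refine ⟨⟨hk1, h2⟩, ?_⟩
      rw [conjPart_cons, if_pos h2, (conjPart_eq_zero_iff hs hk1).mpr h1]
  rw [hset, Nat.card_Ioc]

lemma mConj_cons_succ {a : ℕ} {t : List ℕ} (hs : t.Pairwise (· ≥ ·)) (hha : t.headI ≤ a)
    {i : ℕ} (hi : 1 ≤ i) : mConj (a :: t) (i + 1) = mConj t i := by
  rw [mConj, mConj]
  congr 1
  ext k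
  simp only [Finset.mem_filter, Finset.mem_Icc, List.headI_cons]
  constructor
  · rintro ⟨⟨h1, h2⟩, h3⟩
    rw [conjPart_cons, if_pos h2] at h3
    have h4 : conjPart t k = i := by omega
    have h5 : ¬ t.headI < k := fun hlt => by
      rw [(conjPart_eq_zero_iff hs h1).mpr hlt] at h4; omega
    exact ⟨⟨h1, by omega⟩, h4⟩
  · rintro ⟨⟨h1, h2⟩, h3⟩
    have h2a : k ≤ a := le_trans h2 hha
    refine ⟨⟨h1, h2a⟩, ?_⟩
    rw [conjPart_cons, if_pos h2a, h3]

lemma nConj_cons {a : ℕ} {t : List ℕ} (hs : t.Pairwise (· ≥ ·)) (hha : t.headI ≤ a) :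
    nConj (a :: t) = a.choose 2 + nConj t := by
  rw [nConj]
  simp only [List.headI_cons]
  have hcongr : ∀ k ∈ Finset.Icc 1 a,
      (k - 1) * conjPart (a :: t) k = (k - 1) * conjPart t k + (k - 1) := by
    intro k hk
    simp only [Finset.mem_Icc] at hk
    rw [conjPart_cons, if_pos hk.2, Nat.mul_add, Nat.mul_one]
  rw [Finset.sum_congr rfl hcongr, Finset.sum_add_distrib]
  have hg : ∑ k ∈ Finset.Icc 1 a, (k - 1) = a.choose 2 := by
    rw [← gauss a]
    refine Finset.sum_nbij' (fun k => k - 1) (fun j => j + 1) ?_ ?_ ?_ ?_ ?_ <;>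
      intros <;> simp_all [Finset.mem_Icc, Finset.mem_range] <;> omega
  have hb : ∑ k ∈ Finset.Icc 1 a, (k - 1) * conjPart t k
      = ∑ k ∈ Finset.Icc 1 t.headI, (k - 1) * conjPart t k := by
    refine (Finset.sum_subset (Finset.Icc_subset_Icc_right hha) ?_).symm
    intro k hk hnk
    simp only [Finset.mem_Icc] at hk hnk
    have : t.headI < k := by omega
    rw [(conjPart_eq_zero_iff hs hk.1).mpr this, Nat.mul_zero]
  rw [hg, hb, nConj]
  omega

lemma prod_mConj_cons {a : ℕ} {t : List ℕ} (hs : t.Pairwise (· ≥ ·)) (hha : t.headI ≤ a)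
    (hp : ∀ x ∈ t, 0 < x) (ha : 0 < a) (g : ℕ → F) (hg : g 0 = 1) :
    ∏ i ∈ Finset.Icc 1 (a + t.sum), g (mConj (a :: t) i)
      = g (a - t.headI) * ∏ i ∈ Finset.Icc 1 t.sum, g (mConj t i) := by
  have h1mem : 1 ∈ Finset.Icc 1 (a + t.sum) := by simp; omega
  rw [← Finset.mul_prod_erase _ _ h1mem, mConj_cons_one hs hha]
  congr 1
  have herase : (Finset.Icc 1 (a + t.sum)).erase 1 = Finset.Icc 2 (a + t.sum) := by
    ext x; simp [Finset.mem_Icc]; omega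
  rw [herase]
  have hstep : ∏ i ∈ Finset.Icc 2 (a + t.sum), g (mConj (a :: t) i)
      = ∏ i ∈ Finset.Icc 1 (a + t.sum - 1), g (mConj t i) := by
    refine Finset.prod_nbij' (fun i => i - 1) (fun i => i + 1) ?_ ?_ ?_ ?_ ?_
    · intro x hx; simp only [Finset.mem_Icc] at *; omega
    · intro x hx; simp only [Finset.mem_Icc] at *; omega
    · intro x hx; simp only [Finset.mem_Icc] at hx; omega
    · intro x hx; simp only [Finset.mem_Icc] at hx; omega
    · intro x hx
      simp only [Finset.mem_Icc] at hx
      have hx1 : x = (x - 1) + 1 := by omega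
      rw [hx1, mConj_cons_succ hs hha (by omega)]
      norm_num
  rw [hstep]
  refine (Finset.prod_subset (Finset.Icc_subset_Icc_right ?_) ?_).symm
  · have := headI_le_sum t
    omega
  · intro i hi hni
    simp only [Finset.mem_Icc] at hi hni
    have hlen : t.length < i := by
      have := length_le_sum hp
      omega
    rw [mConj_eq_zero hlen, hg]

lemma sum_mConj_cons {a : ℕ} {t : List ℕ} (hs : t.Pairwise (· ≥ ·)) (hha : t.headI ≤ a)
    (hp : ∀ x ∈ t, 0 < x) (ha : 0 < a) (g : ℕ → ℕ) (hg : g 0 = 0) :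
    ∑ i ∈ Finset.Icc 1 (a + t.sum), g (mConj (a :: t) i)
      = g (a - t.headI) + ∑ i ∈ Finset.Icc 1 t.sum, g (mConj t i) := by
  have h1mem : 1 ∈ Finset.Icc 1 (a + t.sum) := by simp; omega
  rw [← Finset.add_sum_erase _ _ h1mem, mConj_cons_one hs hha]
  congr 1
  have herase : (Finset.Icc 1 (a + t.sum)).erase 1 = Finset.Icc 2 (a + t.sum) := by
    ext x; simp [Finset.mem_Icc]; omega
  rw [herase]
  have hstep : ∑ i ∈ Finset.Icc 2 (a + t.sum), g (mConj (a :: t) i)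
      = ∑ i ∈ Finset.Icc 1 (a + t.sum - 1), g (mConj t i) := by
    refine Finset.sum_nbij' (fun i => i - 1) (fun i => i + 1) ?_ ?_ ?_ ?_ ?_
    · intro x hx; simp only [Finset.mem_Icc] at *; omega
    · intro x hx; simp only [Finset.mem_Icc] at *; omega
    · intro x hx; simp only [Finset.mem_Icc] at hx; omega
    · intro x hx; simp only [Finset.mem_Icc] at hx; omega
    · intro x hx
      simp only [Finset.mem_Icc] at hx
      have hx1 : x = (x - 1) + 1 := by omega
      rw [hx1, mConj_cons_succ hs hha (by omega)]
      norm_num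
  rw [hstep]
  refine (Finset.sum_subset (Finset.Icc_subset_Icc_right ?_) ?_).symm
  · have := headI_le_sum t
    omega
  · intro i hi hni
    simp only [Finset.mem_Icc] at hi hni
    have hlen : t.length < i := by
      have := length_le_sum hp
      omega
    rw [mConj_eq_zero hlen, hg]

lemma pcells_cons (a : ℕ) (t : List ℕ) :
    pcells (a :: t) = ((Finset.range a).image fun j => ((0 : ℕ), j)) ∪
      (pcells t).image fun c => (c.1 + 1, c.2) := by
  ext ⟨i, j⟩
  simp only [mem_pcells, Finset.mem_union, Finset.mem_image, Finset.mem_range,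
    List.length_cons, Prod.mk.injEq, Prod.exists]
  cases i with
  | zero =>
    simp only [List.getD_cons_zero]
    constructor
    · rintro ⟨-, hj⟩
      exact Or.inl ⟨j, hj, trivial, rfl⟩
    · rintro (⟨x, hx, -, rfl⟩ | ⟨c1, c2, -, hc1, -⟩)
      · exact ⟨Nat.succ_pos _, hx⟩
      · omega
  | succ i =>
    simp only [List.getD_cons_succ]
    constructor
    · rintro ⟨h1, h2⟩
      exact Or.inr ⟨i, j, ⟨by omega, h2⟩, rfl, rfl⟩
    · rintro (⟨x, hx, h0, -⟩ | ⟨c1, c2, ⟨hc1, hc2⟩, hceq, rfl⟩)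
      · omega
      · obtain rfl : c1 = i := by omega
        exact ⟨by omega, hc2⟩

lemma armC_cons_zero (a : ℕ) (t : List ℕ) (j : ℕ) :
    armC (a :: t) (0, j) = a - j - 1 := by
  simp [armC]

lemma armC_cons_succ (a : ℕ) (t : List ℕ) (i j : ℕ) :
    armC (a :: t) (i + 1, j) = armC t (i, j) := by
  simp [armC, List.getD_cons_succ]

lemma legC_cons_succ (a : ℕ) (t : List ℕ) (i j : ℕ) :
    legC (a :: t) (i + 1, j) = legC t (i, j) := by
  rw [legC, legC]
  refine Finset.card_nbij' (fun x => x - 1) (fun x => x + 1) ?_ ?_ ?_ ?_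
  · intro x hx
    simp only [Finset.mem_coe, Finset.mem_filter, Finset.mem_Ico, List.length_cons] at hx ⊢
    obtain ⟨⟨hx1, hx2⟩, hx3⟩ := hx
    obtain ⟨y, rfl⟩ : ∃ y, x = y + 1 := ⟨x - 1, by omega⟩
    rw [List.getD_cons_succ] at hx3
    exact ⟨⟨by omega, by omega⟩, by simpa using hx3⟩
  · intro x hx
    simp only [Finset.mem_coe, Finset.mem_filter, Finset.mem_Ico, List.length_cons] at hx ⊢
    obtain ⟨⟨hx1, hx2⟩, hx3⟩ := hx
    exact ⟨⟨by omega, by omega⟩, by simpa [List.getD_cons_succ] using hx3⟩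
  · intro x hx
    simp only [Finset.mem_coe, Finset.mem_filter, Finset.mem_Ico] at hx
    dsimp only; omega
  · intro x hx
    simp only [Finset.mem_coe, Finset.mem_filter, Finset.mem_Ico] at hx
    dsimp only; omega

lemma legC_cons_zero_iff {t : List ℕ} (hs : t.Pairwise (· ≥ ·)) (a j : ℕ) :
    legC (a :: t) (0, j) = 0 ↔ t.headI ≤ j := by
  rw [legC, Finset.card_eq_zero, Finset.filter_eq_empty_iff]
  constructor
  · intro H
    cases t with
    | nil => simp
    | cons b t' =>
      have h1 : (1 : ℕ) ∈ Finset.Ico (0 + 1) (a :: b :: t').length := by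
        simp [Finset.mem_Ico]
      have := H h1
      simp only [List.getD_cons_succ, List.getD_cons_zero] at this
      simpa using Nat.le_of_not_lt this
  · intro H x hx
    simp only [Finset.mem_Ico, List.length_cons] at hx
    obtain ⟨y, rfl⟩ : ∃ y, x = y + 1 := ⟨x - 1, by omega⟩
    simp only [List.getD_cons_succ]
    have hy : y < t.length := by omega
    have := getD_le_headI hs hy
    omega

lemma prod_pcells_cons (a : ℕ) (t : List ℕ) (P : ℕ × ℕ → Prop) [DecidablePred P]
    (f : ℕ × ℕ → F) :
    ∏ c ∈ (pcells (a :: t)).filter P, f c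
      = (∏ j ∈ (Finset.range a).filter fun j => P (0, j), f (0, j)) *
        ∏ c ∈ (pcells t).filter fun c => P (c.1 + 1, c.2), f (c.1 + 1, c.2) := by
  rw [pcells_cons, Finset.filter_union]
  rw [Finset.prod_union]
  · rw [Finset.filter_image, Finset.filter_image,
      Finset.prod_image (by intro x _ y _ h; simpa using h),
      Finset.prod_image (by intro x _ y _ h; simp at h; exact Prod.ext h.1 h.2)]
  · rw [Finset.filter_image, Finset.filter_image]
    rw [Finset.disjoint_left]
    rintro ⟨i, j⟩ h1 h2
    simp only [Finset.mem_image] at h1 h2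
    obtain ⟨x, -, hx⟩ := h1
    obtain ⟨c, -, hc⟩ := h2
    rw [← hx] at hc
    simpa using congrArg Prod.fst hc

lemma prod_Ico_qpoch {h a : ℕ} (hha : h ≤ a) :
    ∏ j ∈ Finset.Ico h a, (1 - q ^ (a - j)) = qpoch (a - h) := by
  rw [qpoch]
  refine Finset.prod_nbij' (fun j => a - j) (fun k => a - k) ?_ ?_ ?_ ?_ ?_ <;>
    intros <;> simp_all [Finset.mem_Ico, Finset.mem_Icc] <;> omega

lemma sum_range_sub {h a : ℕ} (hha : h ≤ a) :
    ∑ j ∈ Finset.range h, (a - j) = a * h - h.choose 2 := by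
  have h1 : ∑ j ∈ Finset.range h, (a - j) + ∑ j ∈ Finset.range h, j
      = ∑ j ∈ Finset.range h, a := by
    rw [← Finset.sum_add_distrib]
    refine Finset.sum_congr rfl fun j hj => ?_
    simp only [Finset.mem_range] at hj
    omega
  rw [gauss, Finset.sum_const, Finset.card_range, smul_eq_mul, mul_comm h a] at h1
  have h2 := choose2_le hha
  omega

lemma prod_range_neg_q {h a : ℕ} (hha : h ≤ a) :
    ∏ j ∈ Finset.range h, (-(q ^ (a - j)))
      = (-1 : F) ^ h * q ^ (a * h - h.choose 2) := by
  have hc : ∀ j ∈ Finset.range h, (-(q ^ (a - j))) = (-1 : F) * q ^ (a - j) := by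
    intro j _; ring
  rw [Finset.prod_congr rfl hc, Finset.prod_mul_distrib, Finset.prod_const,
    Finset.prod_pow_eq_pow_sum, sum_range_sub hha, Finset.card_range]

end AuxStmt10

/-- for a partition `μ` of `n` (a weakly decreasing list of positive
parts),
`∏_{c∈μ, l(c)=0}(1 - q^{a(c)+1}) ∏_{c∈μ, l(c)≠0}(- q^{a(c)+1})
  = (-1)^{n-μ₁} q^{n + n(μ') - M(μ')} ∏_{i=1}^n (q;q)_{m_i(μ')}`. -/
theorem stmt10 (n : ℕ) (l : List ℕ) (hs : l.Pairwise (· ≥ ·)) (hp : ∀ x ∈ l, 0 < x)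
    (hn : l.sum = n) :
    (∏ c ∈ (pcells l).filter fun c => legC l c = 0, (1 - q ^ (armC l c + 1))) *
        ∏ c ∈ (pcells l).filter fun c => legC l c ≠ 0, (-(q ^ (armC l c + 1))) =
      ((-1 : F) ^ (n - l.headI)) *
        q ^ ((n : ℤ) + (nConj l : ℤ) -
          (∑ i ∈ Finset.Icc 1 n, (mConj l i + 1).choose 2 : ℕ)) *
        ∏ i ∈ Finset.Icc 1 n, qpoch (mConj l i) := by
  subst hn
  revert hs hp
  induction l with
  | nil =>
    intro hs hp
    have e : Finset.Icc 1 0 = (∅ : Finset ℕ) := Finset.Icc_eq_empty (by omega)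
    simp [pcells, nConj, e]
  | cons a t ih =>
    intro hs hp
    have hst : t.Pairwise (· ≥ ·) := (List.pairwise_cons.mp hs).2
    have hta : ∀ b ∈ t, b ≤ a := (List.pairwise_cons.mp hs).1
    have htp : ∀ x ∈ t, 0 < x := fun x hx => hp x (List.mem_cons_of_mem a hx)
    have ha : 0 < a := hp a List.mem_cons_self
    have hha : t.headI ≤ a := by
      cases t with
      | nil => simp
      | cons b t' => exact hta b (by simp)
    have hhm : t.headI ≤ t.sum := headI_le_sum t
    have IH := ih hst htp
    have hL0 : (∏ c ∈ (pcells (a :: t)).filter fun c => legC (a :: t) c = 0,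
          (1 - q ^ (armC (a :: t) c + 1)))
        = qpoch (a - t.headI) *
          ∏ c ∈ (pcells t).filter fun c => legC t c = 0, (1 - q ^ (armC t c + 1)) := by
      rw [prod_pcells_cons a t (fun c => legC (a :: t) c = 0)
        (fun c => 1 - q ^ (armC (a :: t) c + 1))]
      congr 1
      · have hf : ((Finset.range a).filter fun j => legC (a :: t) (0, j) = 0)
            = Finset.Ico t.headI a := by
          ext j
          simp only [Finset.mem_filter, Finset.mem_range, Finset.mem_Ico,
            legC_cons_zero_iff hst]
          omega
        rw [hf, ← prod_Ico_qpoch hha]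
        refine Finset.prod_congr rfl fun j hj => ?_
        simp only [Finset.mem_Ico] at hj
        rw [armC_cons_zero]
        have e : a - j - 1 + 1 = a - j := by omega
        rw [e]
      · have hf : ((pcells t).filter fun c => legC (a :: t) (c.1 + 1, c.2) = 0)
            = (pcells t).filter fun c => legC t c = 0 :=
          Finset.filter_congr fun c _ => by simp [legC_cons_succ]
        rw [hf]
        exact Finset.prod_congr rfl fun c _ => by simp [armC_cons_succ]
    have hL1 : (∏ c ∈ (pcells (a :: t)).filter fun c => legC (a :: t) c ≠ 0,
          (-(q ^ (armC (a :: t) c + 1))))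
        = ((-1 : F) ^ t.headI * q ^ (a * t.headI - t.headI.choose 2)) *
          ∏ c ∈ (pcells t).filter fun c => legC t c ≠ 0, (-(q ^ (armC t c + 1))) := by
      rw [prod_pcells_cons a t (fun c => legC (a :: t) c ≠ 0)
        (fun c => -(q ^ (armC (a :: t) c + 1)))]
      congr 1
      · have hf : ((Finset.range a).filter fun j => legC (a :: t) (0, j) ≠ 0)
            = Finset.range t.headI := by
          ext j
          simp only [Finset.mem_filter, Finset.mem_range, ne_eq,
            legC_cons_zero_iff hst]
          omega
        rw [hf, ← prod_range_neg_q hha]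
        refine Finset.prod_congr rfl fun j hj => ?_
        simp only [Finset.mem_range] at hj
        rw [armC_cons_zero]
        have e : a - j - 1 + 1 = a - j := by omega
        rw [e]
      · have hf : ((pcells t).filter fun c => legC (a :: t) (c.1 + 1, c.2) ≠ 0)
            = (pcells t).filter fun c => legC t c ≠ 0 :=
          Finset.filter_congr fun c _ => by simp [legC_cons_succ]
        rw [hf]
        exact Finset.prod_congr rfl fun c _ => by simp [armC_cons_succ]
    have RP := prod_mConj_cons hst hha htp ha qpoch
      (by simp [qpoch, Finset.Icc_eq_empty (show ¬ (1:ℕ) ≤ 0 by omega)])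
    have RM := sum_mConj_cons hst hha htp ha (fun x => (x + 1).choose 2) (by norm_num)
    simp only [List.sum_cons, List.headI_cons]
    rw [hL0, hL1, nConj_cons hst hha, RP, RM]
    have hsub : a + t.sum - a = t.sum := by omega
    rw [hsub]
    have KA := keyArith hha
    have hle := choose2_le hha
    have hsign : ((-1 : F) ^ t.headI) * (-1 : F) ^ (t.sum - t.headI)
        = (-1 : F) ^ t.sum := by
      rw [← pow_add]
      congr 1
      omega
    have hq : (q : F) ^ (a * t.headI - t.headI.choose 2) *
        q ^ ((t.sum : ℤ) + (nConj t : ℤ)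
          - ((∑ i ∈ Finset.Icc 1 t.sum, (mConj t i + 1).choose 2 : ℕ) : ℤ))
        = q ^ (((a + t.sum : ℕ) : ℤ) + ((a.choose 2 + nConj t : ℕ) : ℤ)
          - (((a - t.headI + 1).choose 2
              + ∑ i ∈ Finset.Icc 1 t.sum, (mConj t i + 1).choose 2 : ℕ) : ℤ)) := by
      rw [← zpow_natCast q (a * t.headI - t.headI.choose 2),
        ← zpow_add₀ q_ne_zero]
      congr 1
      omega
    rw [← hsign, ← hq]
    set A := ∏ c ∈ (pcells t).filter fun c => legC t c = 0,
      (1 - q ^ (armC t c + 1)) with hA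
    set B := ∏ c ∈ (pcells t).filter fun c => legC t c ≠ 0,
      (-(q ^ (armC t c + 1))) with hB
    have key : qpoch (a - t.headI) * A *
        (((-1 : F) ^ t.headI * q ^ (a * t.headI - t.headI.choose 2)) * B)
        = qpoch (a - t.headI) *
          ((-1 : F) ^ t.headI * q ^ (a * t.headI - t.headI.choose 2)) * (A * B) := by
      ring
    rw [key, IH]
    ring
end

section
/- The Hall–Littlewood creation operators C_m defined by C_m P[X] = (-1/q)^{m-1} Σ_{r≥0} q^{-r} h_{m+r}[X] · (h_r[X(1-q)])^⊥ P[X] satisfy the commutation relation q C_m C_n - C_{m+1} C_{n-1} = C_n C_m - q C_{n-1} C_{m+1} for all integers m, n. -/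
open Finset MvPolynomial

noncomputable section AuxDev
open Polynomial in
instance : CharZero F := charZero_of_injective_algebraMap (algebraMap ℚ F).injective

lemma natCast_succ_ne (n : ℕ) : ((n:F)+1) ≠ 0 := by
  have h : ((n:F)+1) = ((n+1 : ℕ) : F) := by push_cast; ring
  rw [h]
  exact Nat.cast_ne_zero.mpr (Nat.succ_ne_zero n)

/-- `cF i = h_i[1-q]`. -/
noncomputable def cF : ℕ → F := fun i => if i = 0 then 1 else 1 - q

@[simp] lemma cF_zero : cF 0 = 1 := rfl
@[simp] lemma cF_succ (i : ℕ) : cF (i+1) = 1 - q := rfl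
lemma cF_pos {i : ℕ} (h : i ≠ 0) : cF i = 1 - q := if_neg h

lemma newton (n : ℕ) :
    ∑ k ∈ Finset.range (n + 1), pp (k + 1) * hN (n - k) = ((n:F)+1) • hN (n+1) := by
  rw [show hN (n+1) = ((n : F) + 1)⁻¹ • ∑ k ∈ Finset.range (n + 1), pp (k + 1) * hN (n - k)
    from by rw [hN]]
  rw [smul_smul, mul_inv_cancel₀ (natCast_succ_ne n), one_smul]

lemma geomId (t : ℕ) : (1-q) * (∑ k ∈ Finset.range t, (1 - q^(k+1))) = (t:F)*(1-q) - q + q^(t+1) := by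
  induction t with
  | zero => simp
  | succ t ih =>
    rw [Finset.sum_range_succ, mul_add, ih]
    push_cast; ring

lemma scalarId (r : ℕ) :
    ∑ k ∈ Finset.range r, (1 - q^(k+1)) * cF (r-1-k) = (r:F) * cF r := by
  cases r with
  | zero => simp
  | succ t =>
    rw [Finset.sum_range_succ]
    have h1 : ∀ k ∈ Finset.range t, (1-q^(k+1)) * cF (t+1-1-k) = (1-q^(k+1)) * (1-q) := by
      intro k hk
      rw [Finset.mem_range] at hk
      rw [cF_pos (by omega)]
    rw [Finset.sum_congr rfl h1, ← Finset.sum_mul]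
    have hg := geomId t
    rw [show (t+1-1-t : ℕ) = 0 by omega, cF_zero, cF_pos (Nat.succ_ne_zero t)]
    push_cast
    linear_combination hg

section Tri
variable {M : Type*} [AddCommMonoid M]

lemma tri1 (N : ℕ) (f : ℕ → ℕ → M) :
    ∑ k ∈ Finset.range N, ∑ i ∈ Finset.range (N - k), f k i
      = ∑ i ∈ Finset.range N, ∑ k ∈ Finset.range (N - i), f k i := by
  have key : ∀ g : ℕ → ℕ → M, ∀ k, ∑ i ∈ Finset.range (N - k), g k i
      = ∑ i ∈ Finset.range N, if k + i < N then g k i else 0 := by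
    intro g k
    rw [← Finset.sum_filter]
    apply Finset.sum_congr _ (fun _ _ => rfl)
    ext i; simp; omega
  simp_rw [key]
  rw [Finset.sum_comm]
  apply Finset.sum_congr rfl
  intro i _
  rw [key (fun i k => f k i) i]
  exact Finset.sum_congr rfl fun k _ => by rw [Nat.add_comm]

lemma tri2 (N : ℕ) (f : ℕ → ℕ → M) :
    ∑ k ∈ Finset.range N, ∑ j ∈ Finset.Ico (k+1) (N+1), f k j
      = ∑ j ∈ Finset.range (N+1), ∑ k ∈ Finset.range j, f k j := by
  have key : ∀ k, ∑ j ∈ Finset.Ico (k+1) (N+1), f k j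
      = ∑ j ∈ Finset.range (N+1), if k < j then f k j else 0 := by
    intro k
    rw [← Finset.sum_filter]
    apply Finset.sum_congr _ (fun _ _ => rfl)
    ext j; simp; omega
  simp_rw [key]
  rw [Finset.sum_comm]
  apply Finset.sum_congr rfl
  intro j hj
  rw [Finset.mem_range] at hj
  rw [← Finset.sum_filter]
  apply Finset.sum_congr _ (fun _ _ => rfl)
  ext k; simp; omega

lemma tri3 (N : ℕ) (f : ℕ → ℕ → M) :
    ∑ r ∈ Finset.range N, ∑ i ∈ Finset.range (r+1), f r i
      = ∑ u ∈ Finset.range N, ∑ i ∈ Finset.range (N - u), f (u+i) i := by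
  have key : ∀ r ∈ Finset.range N, ∑ i ∈ Finset.range (r+1), f r i
      = ∑ i ∈ Finset.range N, if i ≤ r then f r i else 0 := by
    intro r hr
    rw [Finset.mem_range] at hr
    rw [← Finset.sum_filter]
    apply Finset.sum_congr _ (fun _ _ => rfl)
    ext i; simp; omega
  rw [Finset.sum_congr rfl key, Finset.sum_comm]
  -- now: ∑ i ∈ range N, ∑ r ∈ range N, if i ≤ r then f r i else 0
  have key2 : ∀ i ∈ Finset.range N, (∑ r ∈ Finset.range N, if i ≤ r then f r i else 0)
      = ∑ j ∈ Finset.range (N - i), f (i+j) i := by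
    intro i hi
    rw [← Finset.sum_filter, show Finset.filter (fun a => i ≤ a) (Finset.range N) = Finset.Ico i N
      from by ext r; simp; omega, Finset.sum_Ico_eq_sum_range]
  rw [Finset.sum_congr rfl key2, tri1 N (fun k i => f (k+i) k)]
  exact Finset.sum_congr rfl fun u _ => Finset.sum_congr rfl fun i _ => by rw [Nat.add_comm]
end Tri
end AuxDev
noncomputable section AuxDev2
open Polynomial

lemma smul_alg (c : F) (f : SymF) : c • f = MvPolynomial.C c * f := by
  rw [Algebra.smul_def, MvPolynomial.algebraMap_eq]

lemma smul_algP (c : F) (f : Polynomial SymF) :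
    c • f = Polynomial.C (MvPolynomial.C c) * f := by
  rw [Algebra.smul_def, Polynomial.algebraMap_apply, MvPolynomial.algebraMap_eq]

lemma C_smulP (c : F) (h : SymF) : Polynomial.C (c • h) = c • Polynomial.C h := by
  rw [smul_alg, map_mul, ← smul_algP]

lemma Tq_pp (j : ℕ) : Tq (pp (j+1)) =
    Polynomial.C (pp (j+1)) + Polynomial.C (MvPolynomial.C (1 - q^(j+1))) * Polynomial.X^(j+1) := by
  simp [Tq, pp]

lemma newton' (n i : ℕ) (h : i ≤ n) :
    ∑ k ∈ Finset.range (n+1-i), pp (k+1) * hN (n-k-i) = (((n-i : ℕ):F)+1) • hN (n+1-i) := by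
  rw [show n+1-i = (n-i)+1 by omega, ← newton (n-i)]
  exact Finset.sum_congr rfl fun k _ => by rw [show n-k-i = n-i-k from by omega]

lemma Tq_hN : ∀ k : ℕ, Tq (hN k)
    = ∑ i ∈ Finset.range (k+1), cF i • (Polynomial.C (hN (k-i)) * Polynomial.X ^ i) := by
  intro k
  induction k using Nat.strong_induction_on with
  | _ k ih =>
  match k with
  | 0 => simp [hN]
  | (n+1) =>
    rw [show hN (n+1) = ((n : F) + 1)⁻¹ • ∑ k ∈ Finset.range (n + 1), pp (k + 1) * hN (n - k)
      from by rw [hN]]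
    rw [map_smul, map_sum, inv_smul_eq_iff₀ (natCast_succ_ne n)]
    have step : ∀ k ∈ Finset.range (n+1), Tq (pp (k+1) * hN (n-k)) =
        (∑ i ∈ Finset.range (n+1-k), cF i • (Polynomial.C (pp (k+1) * hN (n-k-i)) * Polynomial.X ^ i))
        + ∑ i ∈ Finset.range (n+1-k),
            ((1 - q^(k+1)) * cF ((k+1+i)-1-k)) •
              (Polynomial.C (hN (n+1-(k+1+i))) * Polynomial.X ^ (k+1+i)) := by
      intro k hk
      rw [Finset.mem_range] at hk
      rw [map_mul, Tq_pp, ih (n-k) (by omega), add_mul, Finset.mul_sum, Finset.mul_sum,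
        show n-k+1 = n+1-k by omega]
      congr 1
      · refine Finset.sum_congr rfl fun i _ => ?_
        simp only [smul_algP, map_mul]
        ring
      · refine Finset.sum_congr rfl fun i _ => ?_
        rw [show (k+1+i)-1-k = i from by omega, show n+1-(k+1+i) = n-k-i from by omega]
        simp only [smul_algP, map_mul]
        ring
    rw [Finset.sum_congr rfl step, Finset.sum_add_distrib]
    -- A part
    rw [tri1 (n+1) (fun k i => cF i • (Polynomial.C (pp (k+1) * hN (n-k-i)) * Polynomial.X ^ i))]
    have hA : ∀ i ∈ Finset.range (n+1),
        (∑ k ∈ Finset.range (n+1-i), cF i • (Polynomial.C (pp (k+1) * hN (n-k-i)) * Polynomial.X ^ i))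
        = (((n:F)+1) * cF i - (i:F) * cF i) • (Polynomial.C (hN (n+1-i)) * Polynomial.X ^ i) := by
      intro i hi
      rw [Finset.mem_range] at hi
      rw [← Finset.smul_sum, ← Finset.sum_mul, ← map_sum, newton' n i (by omega), C_smulP,
        smul_mul_assoc, smul_smul]
      congr 1
      push_cast [Nat.cast_sub (by omega : i ≤ n)]
      ring
    rw [Finset.sum_congr rfl hA]
    -- B part
    have hB : ∀ k ∈ Finset.range (n+1),
        (∑ i ∈ Finset.range (n+1-k),
            ((1 - q^(k+1)) * cF ((k+1+i)-1-k)) •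
              (Polynomial.C (hN (n+1-(k+1+i))) * Polynomial.X ^ (k+1+i)))
        = ∑ j ∈ Finset.Ico (k+1) (n+2),
            ((1 - q^(k+1)) * cF (j-1-k)) • (Polynomial.C (hN (n+1-j)) * Polynomial.X ^ j) := by
      intro k hk
      rw [Finset.mem_range] at hk
      rw [Finset.sum_Ico_eq_sum_range, show n+2-(k+1) = n+1-k by omega]
    rw [Finset.sum_congr rfl hB,
      tri2 (n+1) (fun k j => ((1 - q^(k+1)) * cF (j-1-k)) • (Polynomial.C (hN (n+1-j)) * Polynomial.X ^ j))]
    have hB2 : ∀ j ∈ Finset.range (n+2),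
        (∑ k ∈ Finset.range j,
          ((1 - q^(k+1)) * cF (j-1-k)) • (Polynomial.C (hN (n+1-j)) * Polynomial.X ^ j))
        = ((j:F) * cF j) • (Polynomial.C (hN (n+1-j)) * Polynomial.X ^ j) := by
      intro j _
      rw [← Finset.sum_smul, scalarId j]
    rw [Finset.sum_congr rfl hB2]
    -- combine
    rw [Finset.sum_range_succ _ (n+1), Finset.smul_sum, Finset.sum_range_succ _ (n+1),
      ← add_assoc, ← Finset.sum_add_distrib]
    congr 1
    · refine Finset.sum_congr rfl fun i hi => ?_
      rw [smul_smul, ← add_smul]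
      congr 1
      ring
    · rw [smul_smul]
      congr 1
end AuxDev2
noncomputable section AuxDev3

lemma hh_neg {a : ℤ} (h : a < 0) : hh a = 0 := if_neg (by omega)
lemma hh_coe (k : ℕ) : hh (k : ℤ) = hN k := by simp [hh]

lemma Tq_hh_coeff (a : ℤ) (i : ℕ) : (Tq (hh a)).coeff i = cF i • hh (a - i) := by
  rcases lt_or_ge a 0 with h | h
  · rw [hh_neg h, hh_neg (by omega), map_zero, Polynomial.coeff_zero, smul_zero]
  · obtain ⟨k, rfl⟩ := Int.eq_ofNat_of_zero_le h
    rw [hh_coe, Tq_hN k, Polynomial.finset_sum_coeff]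
    simp only [Polynomial.coeff_smul, Polynomial.coeff_C_mul, Polynomial.coeff_X_pow,
      mul_ite, mul_one, mul_zero, smul_ite, smul_zero]
    rw [Finset.sum_ite_eq (Finset.range (k+1)) i (fun j => cF j • hN (k - j))]
    rcases le_or_gt i k with hik | hik
    · rw [if_pos (Finset.mem_range.mpr (by omega)),
        show ((k:ℤ) - i) = ((k - i : ℕ) : ℤ) by omega, hh_coe]
    · rw [if_neg (by simp; omega), hh_neg (by omega), smul_zero]

lemma Dq_mul_hh (a : ℤ) (f : SymF) (r : ℕ) :
    Dq r (hh a * f) = ∑ i ∈ Finset.range (r+1), cF i • (hh (a - i) * Dq (r-i) f) := by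
  unfold Dq
  rw [map_mul, Polynomial.coeff_mul,
    Finset.Nat.sum_antidiagonal_eq_sum_range_succ (fun x y => (Tq (hh a)).coeff x * (Tq f).coeff y)]
  exact Finset.sum_congr rfl fun i _ => by rw [Tq_hh_coeff, smul_mul_assoc]

lemma Dq_smul (c : F) (f : SymF) (r : ℕ) : Dq r (c • f) = c • Dq r f := by
  unfold Dq; rw [map_smul, Polynomial.coeff_smul]

lemma Dq_sum {ι : Type*} (s : Finset ι) (f : ι → SymF) (r : ℕ) :
    Dq r (∑ i ∈ s, f i) = ∑ i ∈ s, Dq r (f i) := by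
  unfold Dq; rw [map_sum, Polynomial.finset_sum_coeff]

@[simp] lemma Dq_zero (r : ℕ) : Dq r 0 = 0 := by unfold Dq; rw [map_zero, Polynomial.coeff_zero]

lemma Dq_vanish {r : ℕ} {P : SymF} (h : (Tq P).natDegree < r) : Dq r P = 0 :=
  Polynomial.coeff_eq_zero_of_natDegree_lt h

lemma Cop_eq_sum (m : ℤ) (P : SymF) (N : ℕ) (h : (Tq P).natDegree < N) :
    Cop m P = ((-q⁻¹ : F) ^ (m-1)) •
      ∑ r ∈ Finset.range N, ((q⁻¹:F) ^ r) • (hh (m+r) * Dq r P) := by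
  unfold Cop
  congr 1
  apply Finset.sum_subset
  · intro x hx
    rw [Finset.mem_range] at *
    omega
  · intro x _ hx
    rw [Finset.mem_range] at hx
    rw [Dq_vanish (by omega), mul_zero, smul_zero]
end AuxDev3
noncomputable section AuxDev4
open Polynomial

/-- Inner re-embedding: coefficients `a ↦ C (C a)`, variable `w ↦ X` (outer). -/
noncomputable def inswap : Polynomial SymF →+* Polynomial (Polynomial SymF) :=
  Polynomial.eval₂RingHom (R := SymF) (S := Polynomial (Polynomial SymF)) ((Polynomial.C : Polynomial SymF →+* Polynomial (Polynomial SymF)).comp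
    (Polynomial.C : SymF →+* Polynomial SymF)) Polynomial.X

/-- Swap the two variables of `Polynomial (Polynomial SymF)`. -/
noncomputable def pswap : Polynomial (Polynomial SymF) →+* Polynomial (Polynomial SymF) :=
  Polynomial.eval₂RingHom inswap (Polynomial.C (Polynomial.X : Polynomial SymF))

lemma pswap_coeff (f : Polynomial (Polynomial SymF)) (s u : ℕ) :
    ((pswap f).coeff s).coeff u = (f.coeff u).coeff s := by
  induction f using Polynomial.induction_on' with
  | add p r hp hr => simp [map_add, hp, hr]
  | monomial j g =>
    induction g using Polynomial.induction_on' with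
    | add p r hp hr =>
      simp only [map_add, Polynomial.coeff_add, hp, hr]
    | monomial i a =>
      rw [show pswap ((Polynomial.monomial j) ((Polynomial.monomial i) a))
          = (Polynomial.C (Polynomial.C a) * Polynomial.X ^ i) * (Polynomial.C Polynomial.X) ^ j
        from by
          unfold pswap inswap
          simp [Polynomial.eval₂_monomial]]
      rw [← Polynomial.C_pow, Polynomial.coeff_mul_C, Polynomial.coeff_C_mul_X_pow]
      simp only [Polynomial.coeff_monomial]
      split_ifs with h1 h2 h2 <;>
        simp_all [Polynomial.coeff_C_mul, Polynomial.coeff_X_pow, Polynomial.coeff_monomial, eq_comm]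

/-- Two-variable translation. -/
noncomputable def Tq2 : SymF →ₐ[F] Polynomial (Polynomial SymF) :=
  MvPolynomial.aeval fun k =>
    Polynomial.C (Polynomial.C (MvPolynomial.X k)) +
      Polynomial.C (Polynomial.C (MvPolynomial.C (1 - q ^ (k + 1)))) *
        (Polynomial.X ^ (k + 1) + Polynomial.C (Polynomial.X ^ (k + 1)))

lemma pswap_CC (g : SymF) :
    pswap (Polynomial.C (Polynomial.C g)) = Polynomial.C (Polynomial.C g) := by
  unfold pswap inswap
  simp

lemma pswap_X : pswap (Polynomial.X : Polynomial (Polynomial SymF)) = Polynomial.C Polynomial.X := by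
  unfold pswap
  simp

lemma pswap_CX : pswap (Polynomial.C (Polynomial.X : Polynomial SymF)) = Polynomial.X := by
  unfold pswap inswap
  simp

lemma mapTq_Tq (P : SymF) : (Tq P).map (Tq : SymF →ₐ[F] Polynomial SymF).toRingHom = Tq2 P := by
  have : ∀ P : SymF, (Polynomial.mapAlgHom (Tq : SymF →ₐ[F] Polynomial SymF)).comp Tq P = Tq2 P := by
    intro P
    induction P using MvPolynomial.induction_on with
    | C c => simp [Tq, Tq2, Polynomial.mapAlgHom]
    | add p r hp hr => simp only [map_add, hp, hr]
    | mul_X p k hp =>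
      simp only [map_mul, hp]
      congr 1
      simp [Tq, Tq2, Polynomial.mapAlgHom, Polynomial.map_ofNat]
      ring
  exact this P

lemma pswap_Tq2 (P : SymF) : pswap (Tq2 P) = Tq2 P := by
  induction P using MvPolynomial.induction_on with
  | C c =>
    rw [show (Tq2 (MvPolynomial.C c) : Polynomial (Polynomial SymF))
        = Polynomial.C (Polynomial.C (MvPolynomial.C c)) from by simp [Tq2]]
    unfold pswap inswap
    simp
  | add p r hp hr => simp only [map_add, hp, hr]
  | mul_X p k hp =>
    rw [map_mul, map_mul, hp]
    refine congrArg (Tq2 p * ·) ?_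
    rw [show (Tq2 (MvPolynomial.X k) : Polynomial (Polynomial SymF)) =
      Polynomial.C (Polynomial.C (MvPolynomial.X k)) +
        Polynomial.C (Polynomial.C (MvPolynomial.C (1 - q ^ (k + 1)))) *
          (Polynomial.X ^ (k + 1) + Polynomial.C (Polynomial.X ^ (k + 1))) from by simp [Tq2]]
    rw [map_add, map_mul, map_add, map_pow, map_pow, pswap_CC, pswap_CC, pswap_X, map_pow, pswap_CX]
    ring

lemma Dq_comm (u s : ℕ) (P : SymF) : Dq u (Dq s P) = Dq s (Dq u P) := by
  have key : ∀ a b : ℕ, Dq a (Dq b P) = ((Tq2 P).coeff b).coeff a := by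
    intro a b
    unfold Dq
    rw [← mapTq_Tq, Polynomial.coeff_map]
    rfl
  rw [key, key s u, ← pswap_Tq2 P, pswap_coeff, pswap_Tq2]
end AuxDev4
noncomputable section AuxDev5

/-- The rectangular triple-sum form of `Cop a (Cop b P)` (without the global scalar). -/
noncomputable def Psi (P : SymF) (N : ℕ) (a b : ℤ) : SymF :=
  ∑ u ∈ Finset.range N, ∑ s ∈ Finset.range N, ∑ i ∈ Finset.range N,
    ((q⁻¹:F)^(u+i) * (q⁻¹:F)^s * cF i) •
      (hh (a + u + i) * (hh (b + s - i) * Dq u (Dq s P)))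

set_option maxHeartbeats 2000000 in
lemma comp_expand (a b : ℤ) (P : SymF) (N : ℕ)
    (h1 : (Tq P).natDegree < N)
    (h2 : (Tq (Cop b P)).natDegree < N)
    (hb : ∀ u s i : ℕ, s < N → N ≤ u + i → hh (b + s - i) * Dq u (Dq s P) = 0) :
    Cop a (Cop b P) = (((-q⁻¹:F)^(a-1)) * ((-q⁻¹:F)^(b-1))) • Psi P N a b := by
  have step2 : ∀ r : ℕ, Dq r (Cop b P) = ((-q⁻¹:F)^(b-1)) •
      ∑ s ∈ Finset.range N, ∑ i ∈ Finset.range (r+1),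
        ((q⁻¹:F)^s * cF i) • (hh (b + s - i) * Dq (r-i) (Dq s P)) := by
    intro r
    rw [Cop_eq_sum b P N h1, Dq_smul, Dq_sum]
    congr 1
    refine Finset.sum_congr rfl fun s _ => ?_
    rw [Dq_smul, Dq_mul_hh, Finset.smul_sum]
    refine Finset.sum_congr rfl fun i _ => ?_
    rw [smul_smul]
  rw [Cop_eq_sum a (Cop b P) N h2, mul_smul]
  congr 1
  have step3 : ∀ r ∈ Finset.range N,
      ((q⁻¹:F)^r) • (hh (a + r) * Dq r (Cop b P))
      = ((-q⁻¹:F)^(b-1)) • ∑ s ∈ Finset.range N, ∑ i ∈ Finset.range (r+1),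
          ((q⁻¹:F)^r * (q⁻¹:F)^s * cF i) •
            (hh (a + r) * (hh (b + s - i) * Dq (r-i) (Dq s P))) := by
    intro r _
    rw [step2 r, mul_smul_comm, smul_comm ((q⁻¹:F)^r)]
    congr 1
    rw [Finset.mul_sum, Finset.smul_sum]
    refine Finset.sum_congr rfl fun s _ => ?_
    rw [Finset.mul_sum, Finset.smul_sum]
    refine Finset.sum_congr rfl fun i _ => ?_
    rw [mul_smul_comm, smul_smul]
    congr 1
    ring
  rw [Finset.sum_congr rfl step3, ← Finset.smul_sum]
  congr 1
  -- now reindex the triple sum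
  have swap1 : ∀ r ∈ Finset.range N,
      (∑ s ∈ Finset.range N, ∑ i ∈ Finset.range (r+1),
        ((q⁻¹:F)^r * (q⁻¹:F)^s * cF i) • (hh (a + r) * (hh (b + s - i) * Dq (r-i) (Dq s P))))
      = ∑ i ∈ Finset.range (r+1), ∑ s ∈ Finset.range N,
        ((q⁻¹:F)^r * (q⁻¹:F)^s * cF i) • (hh (a + r) * (hh (b + s - i) * Dq (r-i) (Dq s P))) :=
    fun r _ => Finset.sum_comm
  rw [Finset.sum_congr rfl swap1,
    tri3 N (fun r i => ∑ s ∈ Finset.range N,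
      ((q⁻¹:F)^r * (q⁻¹:F)^s * cF i) • (hh (a + r) * (hh (b + s - i) * Dq (r-i) (Dq s P))))]
  unfold Psi
  refine Finset.sum_congr rfl fun u hu => ?_
  rw [Finset.mem_range] at hu
  rw [Finset.sum_comm]
  refine Finset.sum_congr rfl fun s hs => ?_
  rw [Finset.mem_range] at hs
  -- extend the inner range from N - u to N
  rw [show (Finset.range (N-u)) = Finset.range N ∩ Finset.range (N-u) from
    (Finset.inter_eq_right.mpr (Finset.range_subset_range.mpr (by omega))).symm]
  rw [← Finset.sum_ite_mem]
  refine Finset.sum_congr rfl fun i hi => ?_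
  rw [Finset.mem_range] at hi
  by_cases hiu : i ∈ Finset.range (N - u)
  · rw [if_pos hiu]
    rw [Finset.mem_range] at hiu
    have e1 : u + i - i = u := by omega
    have e2 : (a + ↑(u+i) : ℤ) = a + u + i := by push_cast; ring
    rw [e1, e2]
  · rw [if_neg hiu]
    rw [Finset.mem_range] at hiu
    rw [hb u s i hs (by omega), mul_zero, smul_zero]

lemma telescope (N : ℕ) (hN1 : 1 ≤ N) (T : ℕ → SymF) (hT : T N = 0) (β : F) :
    q • (∑ i ∈ Finset.range N, (β * (q⁻¹:F)^i * cF i) • T i)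
      - ∑ i ∈ Finset.range N, (β * (q⁻¹:F)^i * cF i) • T (i+1)
    = (q*β) • T 0 - (q*β) • T 1 := by
  have hq : (q:F) ≠ 0 := RatFunc.X_ne_zero
  have hsec : ∀ i ∈ Finset.range N, (β * (q⁻¹:F)^i * cF i) • T (i+1)
      = (q * β * (q⁻¹:F)^(i+1) * cF (i+1)) • T (i+1) + (if i = 0 then (q*β) • T 1 else 0) := by
    intro i _
    cases i with
    | zero =>
      rw [if_pos rfl, ← add_smul]
      congr 1
      rw [cF_zero, cF_succ]
      field_simp
      linear_combination (β * q - β) * mul_inv_cancel₀ hq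
    | succ j =>
      rw [if_neg (Nat.succ_ne_zero j), add_zero]
      congr 1
      rw [cF_pos (Nat.succ_ne_zero j), cF_pos (Nat.succ_ne_zero (j+1))]
      field_simp
      linear_combination (β * q * q⁻¹ * q⁻¹ ^ j - β * q⁻¹ * q⁻¹ ^ j) * mul_inv_cancel₀ hq
  rw [Finset.smul_sum]
  have h1 : ∀ i ∈ Finset.range N, q • ((β * (q⁻¹:F)^i * cF i) • T i)
      = (q * β * (q⁻¹:F)^i * cF i) • T i := by
    intro i _
    rw [smul_smul]
    congr 1
    ring
  rw [Finset.sum_congr rfl h1, Finset.sum_congr rfl hsec, Finset.sum_add_distrib,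
    Finset.sum_ite_eq' (Finset.range N) 0 (fun _ => (q*β) • T 1),
    if_pos (Finset.mem_range.mpr (by omega))]
  have h2 : ∑ i ∈ Finset.range N, (q * β * (q⁻¹:F)^(i+1) * cF (i+1)) • T (i+1)
      = (∑ i ∈ Finset.range N, (q * β * (q⁻¹:F)^i * cF i) • T i)
        - (q * β * (q⁻¹:F)^0 * cF 0) • T 0 := by
    rw [eq_sub_iff_add_eq,
      ← Finset.sum_range_succ' (fun i => (q * β * (q⁻¹:F)^i * cF i) • T i) N,
      Finset.sum_range_succ, hT, smul_zero, add_zero]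
  rw [h2]
  have h3 : (q * β * (q⁻¹:F)^0 * cF 0) • T 0 = (q*β) • T 0 := by
    congr 1
    rw [pow_zero, cF_zero]
    ring
  rw [h3]
  abel

/-- The telescoped form. -/
noncomputable def Xi (P : SymF) (N : ℕ) (a b : ℤ) : SymF :=
  ∑ u ∈ Finset.range N, ∑ s ∈ Finset.range N,
    (q * ((q⁻¹:F)^u * (q⁻¹:F)^s)) •
      ((hh (a + u) * (hh (b + s) * Dq u (Dq s P)))
        - (hh (a + u + 1) * (hh (b + s - 1) * Dq u (Dq s P))))

lemma telescoped (P : SymF) (N : ℕ) (hN1 : 1 ≤ N) (a b : ℤ)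
    (hb : ∀ u s i : ℕ, s < N → N ≤ u + i → hh (b + s - i) * Dq u (Dq s P) = 0) :
    q • Psi P N a b - Psi P N (a+1) (b-1) = Xi P N a b := by
  unfold Psi Xi
  rw [Finset.smul_sum, ← Finset.sum_sub_distrib]
  refine Finset.sum_congr rfl fun u hu => ?_
  rw [Finset.mem_range] at hu
  rw [Finset.smul_sum, ← Finset.sum_sub_distrib]
  refine Finset.sum_congr rfl fun s hs => ?_
  rw [Finset.mem_range] at hs
  have e1 : ∀ i ∈ Finset.range N,
      ((q⁻¹:F)^(u+i) * (q⁻¹:F)^s * cF i) • (hh (a + u + i) * (hh (b + s - i) * Dq u (Dq s P)))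
      = (((q⁻¹:F)^u * (q⁻¹:F)^s) * (q⁻¹:F)^i * cF i) •
          ((fun j : ℕ => hh (a + u + j) * (hh (b + s - j) * Dq u (Dq s P))) i) := by
    intro i _
    congr 1
    rw [pow_add]
    ring
  have e2 : ∀ i ∈ Finset.range N,
      ((q⁻¹:F)^(u+i) * (q⁻¹:F)^s * cF i) • (hh ((a+1) + u + i) * (hh ((b-1) + s - i) * Dq u (Dq s P)))
      = (((q⁻¹:F)^u * (q⁻¹:F)^s) * (q⁻¹:F)^i * cF i) •
          ((fun j : ℕ => hh (a + u + j) * (hh (b + s - j) * Dq u (Dq s P))) (i+1)) := by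
    intro i _
    have i1 : ((a+1) + u + i : ℤ) = a + u + (i+1 : ℕ) := by push_cast; ring
    have i2 : ((b-1) + s - i : ℤ) = b + s - (i+1 : ℕ) := by push_cast; ring
    rw [i1, i2]
    congr 1
    rw [pow_add]
    ring
  rw [Finset.sum_congr rfl e1, Finset.sum_congr rfl e2,
    telescope N hN1 _ (by
      rw [hb u s N hs (by omega), mul_zero]) ((q⁻¹:F)^u * (q⁻¹:F)^s), ← smul_sub]
  congr 2 <;> push_cast <;> ring_nf

lemma Xi_swap (P : SymF) (N : ℕ) (m n : ℤ) :
    Xi P N (n-1) (m+1) = - Xi P N m n := by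
  unfold Xi
  rw [Finset.sum_comm]
  rw [show (-∑ u ∈ Finset.range N, ∑ s ∈ Finset.range N,
      (q * ((q⁻¹:F)^u * (q⁻¹:F)^s)) •
        ((hh (m + u) * (hh (n + s) * Dq u (Dq s P)))
          - (hh (m + u + 1) * (hh (n + s - 1) * Dq u (Dq s P)))))
    = ∑ u ∈ Finset.range N, ∑ s ∈ Finset.range N,
      -((q * ((q⁻¹:F)^u * (q⁻¹:F)^s)) •
        ((hh (m + u) * (hh (n + s) * Dq u (Dq s P)))
          - (hh (m + u + 1) * (hh (n + s - 1) * Dq u (Dq s P))))) from by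
    rw [← Finset.sum_neg_distrib]
    exact Finset.sum_congr rfl fun u _ => by rw [← Finset.sum_neg_distrib]]
  refine Finset.sum_congr rfl fun x _ => Finset.sum_congr rfl fun y _ => ?_
  rw [← smul_neg]
  have hsc : (q * ((q⁻¹:F)^y * (q⁻¹:F)^x)) = (q * ((q⁻¹:F)^x * (q⁻¹:F)^y)) := by ring
  rw [hsc]
  congr 1
  rw [Dq_comm y x P,
    show ((n-1) + y : ℤ) = n + y - 1 from by ring,
    show ((m+1) + x : ℤ) = m + x + 1 from by ring,
    show (n + y - 1 + 1 : ℤ) = n + y from by ring,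
    show (m + x + 1 - 1 : ℤ) = m + x from by ring]
  ring

/-- the Hall–Littlewood creation operators `ℂ_m` satisfy
`q ℂ_m ℂ_n - ℂ_{m+1} ℂ_{n-1} = ℂ_n ℂ_m - q ℂ_{n-1} ℂ_{m+1}` for all `m, n ∈ ℤ`. -/
theorem stmt13 (m n : ℤ) (P : SymF) :
    q • Cop m (Cop n P) - Cop (m + 1) (Cop (n - 1) P) =
      Cop n (Cop m P) - q • Cop (n - 1) (Cop (m + 1) P) := by
  have hq : (q:F) ≠ 0 := RatFunc.X_ne_zero
  have hbase : (-q⁻¹ : F) ≠ 0 := neg_ne_zero.mpr (inv_ne_zero hq)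
  set d1 := (Tq P).natDegree with hd1
  set d2 := (Finset.range (d1+1)).sup (fun s => (Tq (Dq s P)).natDegree) with hd2
  set N := d1 + d2 + ((Tq (Cop n P)).natDegree + (Tq (Cop (n-1) P)).natDegree
      + (Tq (Cop m P)).natDegree + (Tq (Cop (m+1) P)).natDegree)
      + (m.toNat + n.toNat) + 2 with hN
  have h1 : d1 < N := by omega
  have hN1 : 1 ≤ N := by omega
  have hDD : ∀ u s : ℕ, (d2 < u ∨ d1 < s) → Dq u (Dq s P) = 0 := by
    intro u s h
    rcases h with h | h
    · rcases le_or_gt s d1 with hs | hs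
      · exact Dq_vanish (lt_of_le_of_lt (Finset.le_sup (f := fun s => (Tq (Dq s P)).natDegree)
          (Finset.mem_range.mpr (by omega))) h)
      · rw [Dq_vanish (show d1 < s from hs), Dq_zero]
    · rw [Dq_vanish h, Dq_zero]
  have hbound : ∀ b : ℤ, (b + d1 + d2 < N) →
      ∀ u s i : ℕ, s < N → N ≤ u + i → hh (b + s - i) * Dq u (Dq s P) = 0 := by
    intro b hbN u s i _ hui
    rcases le_or_gt u d2 with hu | hu
    · rcases le_or_gt s d1 with hs | hs
      · rw [hh_neg (show (b + s - i : ℤ) < 0 by omega), zero_mul]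
      · rw [hDD u s (Or.inr hs), mul_zero]
    · rw [hDD u s (Or.inl hu), mul_zero]
  have hbn : (n + d1 + d2 : ℤ) < N := by
    have := Int.self_le_toNat n
    omega
  have hbn1 : ((n-1) + d1 + d2 : ℤ) < N := by
    have := Int.self_le_toNat n
    omega
  have hbm : (m + d1 + d2 : ℤ) < N := by
    have := Int.self_le_toNat m
    omega
  have hbm1 : ((m+1) + d1 + d2 : ℤ) < N := by
    have := Int.self_le_toNat m
    omega
  have E1 := comp_expand m n P N h1 (by omega) (hbound n hbn)
  have E2 := comp_expand (m+1) (n-1) P N h1 (by omega) (hbound (n-1) hbn1)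
  have E3 := comp_expand n m P N h1 (by omega) (hbound m hbm)
  have E4 := comp_expand (n-1) (m+1) P N h1 (by omega) (hbound (m+1) hbm1)
  set e : F := (-q⁻¹:F)^(m+n-2) with he
  have sc1 : ((-q⁻¹:F)^(m-1)) * ((-q⁻¹:F)^(n-1)) = e := by
    rw [he, ← zpow_add₀ hbase]
    congr 1
    ring
  have sc2 : ((-q⁻¹:F)^(m+1-1)) * ((-q⁻¹:F)^(n-1-1)) = e := by
    rw [he, ← zpow_add₀ hbase]
    congr 1
    ring
  have sc3 : ((-q⁻¹:F)^(n-1)) * ((-q⁻¹:F)^(m-1)) = e := by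
    rw [he, ← zpow_add₀ hbase]
    congr 1
    ring
  have sc4 : ((-q⁻¹:F)^(n-1-1)) * ((-q⁻¹:F)^(m+1-1)) = e := by
    rw [he, ← zpow_add₀ hbase]
    congr 1
    ring
  rw [E1, E2, E3, E4, sc1, sc2, sc3, sc4]
  rw [smul_comm q e, ← smul_sub, smul_comm q e, ← smul_sub]
  congr 1
  rw [telescoped P N hN1 m n (hbound n hbn)]
  rw [← neg_neg (Xi P N m n), ← Xi_swap P N m n,
    ← telescoped P N hN1 (n-1) (m+1) (hbound (m+1) hbm1), neg_sub,
    show ((n-1)+1 : ℤ) = n from by ring, show ((m+1)-1 : ℤ) = m from by ring]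
end AuxDev5
end

section
/- The Bernstein creation operator S_m = Σ_{r≥0} (-1)^r h_{m+r}[X] e_r^⊥ expands in terms of the operators C_a as S_m = (-q)^{m-1} Σ_{i≥0} C_{m+i} e_i^⊥. -/
open Finset MvPolynomial

section Aux

open Polynomial

lemma coeff_eval_X {R : Type*} [CommSemiring R] (g : Polynomial (Polynomial R)) (d : ℕ) :
    (g.eval Polynomial.X).coeff d = ∑ i ∈ Finset.range (d + 1), (g.coeff i).coeff (d - i) := by
  induction g using Polynomial.induction_on' with
  | add p r hp hr => simp [hp, hr, Finset.sum_add_distrib]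
  | monomial n a =>
    rw [Polynomial.eval_monomial, Polynomial.coeff_mul_X_pow']
    rw [Finset.sum_congr rfl (fun i _ => by rw [Polynomial.coeff_monomial, apply_ite (fun p : Polynomial R => p.coeff (d - i)), Polynomial.coeff_zero])]
    rw [Finset.sum_ite_eq (Finset.range (d + 1)) n (fun i => a.coeff (d - i))]
    simp [Finset.mem_range, Nat.lt_succ_iff]

lemma coeff_scaleq (c : F) (f : Polynomial SymF) (d : ℕ) :
    (Polynomial.eval₂ Polynomial.C (Polynomial.C (MvPolynomial.C c) * Polynomial.X) f).coeff d
      = c ^ d • f.coeff d := by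
  induction f using Polynomial.induction_on' with
  | add p r hp hr => simp [hp, hr]
  | monomial n a =>
    rw [Polynomial.eval₂_monomial, mul_pow, ← mul_assoc, ← Polynomial.C_pow, ← Polynomial.C_mul,
      ← map_pow]
    rw [Polynomial.coeff_mul_X_pow', Polynomial.coeff_monomial]
    by_cases h : n = d
    · subst h
      rw [if_pos (le_refl n), if_pos rfl, Nat.sub_self, Polynomial.coeff_C_zero,
        MvPolynomial.smul_eq_C_mul, mul_comm]
    · rw [if_neg h]
      by_cases h2 : n ≤ d
      · have h3 : ¬(d - n = 0) := fun hh => h (le_antisymm h2 (Nat.sub_eq_zero_iff_le.mp hh))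
        rw [if_pos h2, Polynomial.coeff_C, if_neg h3, smul_zero]
      · rw [if_neg h2, smul_zero]

lemma evalTq_T1 (P : SymF) :
    Polynomial.eval₂ (Tq : SymF →+* Polynomial SymF) Polynomial.X (T1 P)
      = Polynomial.eval₂ Polynomial.C (Polynomial.C (MvPolynomial.C q) * Polynomial.X) (T1 P) := by
  have h : (Polynomial.eval₂RingHom (Tq : SymF →+* Polynomial SymF) Polynomial.X).comp
        (T1 : SymF →+* Polynomial SymF)
      = (Polynomial.eval₂RingHom (Polynomial.C : SymF →+* Polynomial SymF)
          (Polynomial.C (MvPolynomial.C q) * Polynomial.X)).comp (T1 : SymF →+* Polynomial SymF) := by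
    apply MvPolynomial.ringHom_ext
    · intro a
      simp [T1, Tq]
    · intro k
      simp [T1, Tq, sub_mul, map_sub, map_pow]
      ring
  exact congrFun (congrArg (fun h => h.toFun) h) P

end Aux


lemma scalar_eq (m : ℤ) (i : ℕ) :
    (-q : F) ^ (m - 1) * (-q⁻¹ : F) ^ (m + (i : ℤ) - 1) = (-1 : F) ^ i * (q⁻¹ : F) ^ i := by
  have h0 : (-q : F) ≠ 0 := neg_ne_zero.mpr RatFunc.X_ne_zero
  have h1 : (-q⁻¹ : F) = (-q)⁻¹ := inv_neg.symm
  rw [h1, inv_zpow, ← zpow_neg, ← zpow_add₀ h0]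
  have h2 : m - 1 + -(m + (i : ℤ) - 1) = -(i : ℤ) := by ring
  rw [h2, zpow_neg, zpow_natCast, ← inv_pow, inv_neg, neg_pow]

/-- the Bernstein creation operator expands as
`S_m = (-q)^{m-1} ∑_{i ≥ 0} ℂ_{m+i} e_i^⊥` (the sum is finite on each input:
terms with `i > deg_z(P[X-z])` vanish since `e_i^⊥ P = 0` there). -/
theorem stmt16 (m : ℤ) (P : SymF) :
    Sop m P =
      ((-q : F) ^ (m - 1)) •
        ∑ i ∈ Finset.range ((T1 P).natDegree + 1), Cop (m + i) (eperp i P) := by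
  classical
  have hq0 : (q : F) ≠ 0 := RatFunc.X_ne_zero
  set f : Polynomial SymF := T1 P with hf
  set n : ℕ := f.natDegree with hn
  set Q : Polynomial (Polynomial SymF) := f.map (Tq : SymF →+* Polynomial SymF) with hQdef
  set N : ℕ := (Finset.range (n + 1)).sup (fun i => (Tq (eperp i P)).natDegree) with hNdef
  set M : ℕ := n + N + 1 with hM
  have hfc : ∀ i : ℕ, f.coeff i = ((-1 : F) ^ i) • eperp i P := by
    intro i
    rw [eperp, ← hf, smul_smul, ← mul_pow, neg_mul_neg, one_mul, one_pow, one_smul]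
  have hQc : ∀ i : ℕ, Q.coeff i = ((-1 : F) ^ i) • Tq (eperp i P) := by
    intro i
    rw [hQdef, Polynomial.coeff_map]
    show Tq (f.coeff i) = _
    rw [hfc i, map_smul]
  have hQz : ∀ i : ℕ, n < i → Q.coeff i = 0 := by
    intro i hi
    rw [hQdef, Polynomial.coeff_map, Polynomial.coeff_eq_zero_of_natDegree_lt hi, map_zero]
  have hQz2 : ∀ i r : ℕ, (Tq (eperp i P)).natDegree < r → (Q.coeff i).coeff r = 0 := by
    intro i r hr
    rw [hQc i, Polynomial.coeff_smul, Polynomial.coeff_eq_zero_of_natDegree_lt hr, smul_zero]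
  have hGvanish : ∀ i r : ℕ, M ≤ i + r → (Q.coeff i).coeff r = 0 := by
    intro i r h
    by_cases hi : i ≤ n
    · refine hQz2 i r ?_
      have h1 : (Tq (eperp i P)).natDegree ≤ N :=
        Finset.le_sup (f := fun i => (Tq (eperp i P)).natDegree)
          (Finset.mem_range.mpr (by omega))
      omega
    · rw [hQz i (by omega), Polynomial.coeff_zero]
  set G : ℕ → ℕ → SymF :=
    fun i r => ((q⁻¹ : F) ^ (i + r)) • (hh (m + i + r) * (Q.coeff i).coeff r) with hG
  have key : ∀ i ∈ Finset.range (n + 1),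
      ((-q : F) ^ (m - 1)) • Cop (m + i) (eperp i P) = ∑ r ∈ Finset.range M, G i r := by
    intro i hi
    have hsub : Finset.range ((Tq (eperp i P)).natDegree + 1) ⊆ Finset.range M := by
      intro x hx
      have h1 : (Tq (eperp i P)).natDegree ≤ N :=
        Finset.le_sup (f := fun i => (Tq (eperp i P)).natDegree) hi
      simp only [Finset.mem_range] at *
      omega
    have hzero : ∀ r ∈ Finset.range M, r ∉ Finset.range ((Tq (eperp i P)).natDegree + 1) →
        ((q⁻¹ : F) ^ r) • (hh (m + i + r) * Dq r (eperp i P)) = 0 := by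
      intro r _ hr
      have h2 : (Tq (eperp i P)).natDegree < r := by
        simp only [Finset.mem_range] at hr; omega
      rw [Dq, Polynomial.coeff_eq_zero_of_natDegree_lt h2, mul_zero, smul_zero]
    rw [Cop, Finset.sum_subset hsub hzero, smul_smul, scalar_eq m i, Finset.smul_sum]
    refine Finset.sum_congr rfl fun r _ => ?_
    simp only [hG]
    rw [Dq, hQc i, Polynomial.coeff_smul, mul_smul_comm, smul_smul, smul_smul, pow_add]
    congr 1
    ring
  have houter : ∑ i ∈ Finset.range (n + 1), ∑ r ∈ Finset.range M, G i r
      = ∑ i ∈ Finset.range M, ∑ r ∈ Finset.range M, G i r := by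
    apply Finset.sum_subset
    · intro x hx
      simp only [Finset.mem_range] at *
      omega
    · intro i _ hi
      refine Finset.sum_eq_zero fun r _ => ?_
      have h1 : Q.coeff i = 0 := hQz i (by simp only [Finset.mem_range] at hi; omega)
      simp only [hG, h1, Polynomial.coeff_zero, mul_zero, smul_zero]
  have hsquare : ∑ i ∈ Finset.range M, ∑ r ∈ Finset.range M, G i r
      = ∑ d ∈ Finset.range M, ∑ i ∈ Finset.range (d + 1), G i (d - i) := by
    rw [← Finset.sum_product']
    have hstep : ∀ d ∈ Finset.range M, ∑ i ∈ Finset.range (d + 1), G i (d - i)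
        = ∑ p ∈ Finset.HasAntidiagonal.antidiagonal d, G p.1 p.2 := fun d _ =>
      (Finset.Nat.sum_antidiagonal_eq_sum_range_succ_mk (fun p => G p.1 p.2) d).symm
    rw [Finset.sum_congr rfl hstep]
    have hdisj : (↑(Finset.range M) : Set ℕ).PairwiseDisjoint Finset.HasAntidiagonal.antidiagonal := by
      intro a _ b _ hab
      simp only [Finset.disjoint_left]
      intro p hpa hpb
      rw [Finset.HasAntidiagonal.mem_antidiagonal] at hpa hpb
      exact hab (hpa ▸ hpb)
    rw [← Finset.sum_biUnion hdisj]
    refine (Finset.sum_subset ?_ ?_).symm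
    · intro p hp
      rw [Finset.mem_biUnion] at hp
      obtain ⟨d, hd, hpd⟩ := hp
      rw [Finset.HasAntidiagonal.mem_antidiagonal] at hpd
      rw [Finset.mem_range] at hd
      rw [Finset.mem_product, Finset.mem_range, Finset.mem_range]
      omega
    · intro p hp hp2
      have hM2 : M ≤ p.1 + p.2 := by
        by_contra hlt
        exact hp2 (Finset.mem_biUnion.mpr ⟨p.1 + p.2, Finset.mem_range.mpr (by omega),
          Finset.HasAntidiagonal.mem_antidiagonal.mpr rfl⟩)
      simp only [hG, hGvanish p.1 p.2 hM2, mul_zero, smul_zero]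
  have hcollapse : ∀ d : ℕ, ∑ i ∈ Finset.range (d + 1), (Q.coeff i).coeff (d - i)
      = ((q : F) ^ d) • f.coeff d := by
    intro d
    rw [← coeff_eval_X Q d, hQdef, ← Polynomial.eval₂_eq_eval_map, evalTq_T1 P, ← hf,
      coeff_scaleq]
  have hinner : ∀ d ∈ Finset.range M, ∑ i ∈ Finset.range (d + 1), G i (d - i)
      = hh (m + d) * f.coeff d := by
    intro d _
    have h1 : ∀ i ∈ Finset.range (d + 1), G i (d - i)
        = ((q⁻¹ : F) ^ d) • (hh (m + d) * (Q.coeff i).coeff (d - i)) := by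
      intro i hi
      rw [Finset.mem_range, Nat.lt_succ_iff] at hi
      have h2 : i + (d - i) = d := by omega
      have h3 : m + (i : ℤ) + ((d - i : ℕ) : ℤ) = m + (d : ℤ) := by
        rw [Nat.cast_sub hi]; ring
      simp only [hG, h2, h3]
    rw [Finset.sum_congr rfl h1, ← Finset.smul_sum, ← Finset.mul_sum, hcollapse d,
      mul_smul_comm, smul_smul, ← mul_pow, inv_mul_cancel₀ hq0, one_pow, one_smul]
  calc Sop m P
      = ∑ r ∈ Finset.range (n + 1), hh (m + r) * f.coeff r := by
        rw [Sop, ← hf]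
        refine Finset.sum_congr rfl fun r _ => ?_
        rw [hfc r, mul_smul_comm]
    _ = ∑ d ∈ Finset.range M, hh (m + d) * f.coeff d := by
        apply Finset.sum_subset
        · intro x hx
          simp only [Finset.mem_range] at *
          omega
        · intro d _ hd
          rw [Finset.mem_range] at hd
          rw [Polynomial.coeff_eq_zero_of_natDegree_lt (by omega), mul_zero]
    _ = ∑ d ∈ Finset.range M, ∑ i ∈ Finset.range (d + 1), G i (d - i) :=
        (Finset.sum_congr rfl hinner).symm
    _ = ∑ i ∈ Finset.range M, ∑ r ∈ Finset.range M, G i r := hsquare.symm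
    _ = ∑ i ∈ Finset.range (n + 1), ∑ r ∈ Finset.range M, G i r := houter.symm
    _ = ∑ i ∈ Finset.range (n + 1), ((-q : F) ^ (m - 1)) • Cop (m + i) (eperp i P) :=
        (Finset.sum_congr rfl key).symm
    _ = ((-q : F) ^ (m - 1)) • ∑ i ∈ Finset.range (n + 1), Cop (m + i) (eperp i P) :=
        (Finset.smul_sum).symm
end
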